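/- arXiv:2107.13495 — 4 statements merged into one kernel-verified Lean document; each statement's English description precedes it below -/
import Mathlib

section
/- For each n ≥ 1 and 1 ≤ k ≤ n, the number of graphs on vertex set {1,...,n} satisfying the interval-clique property and having exactly k maximal cliques equals (1/n) · C(n,k) · C(n,k-1) (the Narayana number N(n,k)). -/
/-- Interval-clique property: whenever `i < j` are adjacent, `{i,...,j}` is a clique. -/
def IntervalClique {n : ℕ} (G : SimpleGraph (Fin n)) : Prop :=
  ∀ i j k l : Fin n, i < j → G.Adj i j → i ≤ k → k ≤ j → i ≤ l → l ≤ j → k ≠ l → G.Adj k l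

/-- `s` is a maximal clique of `G`. -/
def IsMaxClique {n : ℕ} (G : SimpleGraph (Fin n)) (s : Finset (Fin n)) : Prop :=
  G.IsClique (s : Set (Fin n)) ∧ ∀ t : Finset (Fin n), G.IsClique (t : Set (Fin n)) → s ⊆ t → s = t

/-- The number of maximal cliques of `G`. -/
noncomputable def numMaxCliques {n : ℕ} (G : SimpleGraph (Fin n)) : ℕ :=
  Nat.card {s : Finset (Fin n) // IsMaxClique G s}

open Finset

noncomputable section
open scoped Classical

/-- prefix count: number of elements of `A` with value `≤ t`. -/
def cnt {N : ℕ} (A : Finset (Fin N)) (t : ℕ) : ℕ :=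
  (A.filter (fun a : Fin N => (a : ℕ) ≤ t)).card

def Ballot {N : ℕ} (X V : Finset (Fin N)) : Prop := ∀ t : ℕ, cnt V t ≤ cnt X t

lemma cnt_mono {N : ℕ} (A : Finset (Fin N)) {s t : ℕ} (h : s ≤ t) : cnt A s ≤ cnt A t := by
  apply card_le_card
  intro a ha
  simp only [mem_filter] at ha ⊢
  exact ⟨ha.1, ha.2.trans h⟩

lemma cnt_le_card {N : ℕ} (A : Finset (Fin N)) (t : ℕ) : cnt A t ≤ A.card :=
  card_le_card (filter_subset _ _)

lemma cnt_eq_card {N : ℕ} (A : Finset (Fin N)) {t : ℕ} (h : N ≤ t + 1) : cnt A t = A.card := by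
  unfold cnt
  rw [filter_true_of_mem]
  intro a _
  have := a.isLt
  omega

lemma cnt_succ_le {N : ℕ} (A : Finset (Fin N)) (s : ℕ) : cnt A (s + 1) ≤ cnt A s + 1 := by
  have hsub : A.filter (fun a : Fin N => (a : ℕ) ≤ s + 1) ⊆
      A.filter (fun a : Fin N => (a : ℕ) ≤ s) ∪ A.filter (fun a : Fin N => (a : ℕ) = s + 1) := by
    intro a ha
    simp only [mem_filter, mem_union] at ha ⊢
    by_cases h : (a : ℕ) ≤ s
    · exact Or.inl ⟨ha.1, h⟩
    · exact Or.inr ⟨ha.1, by omega⟩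
  have h1 : (A.filter (fun a : Fin N => (a : ℕ) = s + 1)).card ≤ 1 := by
    apply card_le_one.2
    intro a ha b hb
    simp only [mem_filter] at ha hb
    apply Fin.ext
    omega
  calc cnt A (s+1) ≤ _ := card_le_card hsub
    _ ≤ cnt A s + (A.filter (fun a : Fin N => (a : ℕ) = s + 1)).card := card_union_le _ _
    _ ≤ cnt A s + 1 := by omega

lemma cnt_zero_le_one {N : ℕ} (A : Finset (Fin N)) : cnt A 0 ≤ 1 := by
  apply card_le_one.2
  intro a ha b hb
  simp only [mem_filter] at ha hb
  apply Fin.ext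
  omega

lemma not_ballot_of_card_lt {N : ℕ} {X V : Finset (Fin N)} (h : X.card < V.card) :
    ¬ Ballot X V := by
  intro hb
  have := hb N
  rw [cnt_eq_card X (by omega), cnt_eq_card V (by omega)] at this
  omega

/-- the set of violation thresholds -/
def vset {N : ℕ} (X V : Finset (Fin N)) : Finset ℕ :=
  (Finset.range N).filter (fun t => cnt X t < cnt V t)

lemma vset_nonempty {N : ℕ} {X V : Finset (Fin N)} (hc : V.card ≤ X.card)
    (h : ¬ Ballot X V) : (vset X V).Nonempty := by
  simp only [Ballot, not_forall, not_le] at h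
  obtain ⟨t, ht⟩ := h
  by_cases hN : t < N
  · exact ⟨t, by simp [vset, hN, ht]⟩
  · exfalso
    have h1 : cnt X t = X.card := cnt_eq_card X (by omega)
    have h2 : cnt V t = V.card := cnt_eq_card V (by omega)
    omega

lemma vset_nonempty' {N : ℕ} {X V : Finset (Fin N)} (hc : X.card < V.card) :
    (vset X V).Nonempty := by
  have hN : 1 ≤ N := by
    rcases V.eq_empty_or_nonempty with rfl | ⟨v, _⟩
    · simp at hc
    · exact Nat.one_le_iff_ne_zero.2 (by rintro rfl; exact absurd v.isLt (by omega))
  refine ⟨N - 1, ?_⟩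
  have h1 : cnt X (N-1) = X.card := cnt_eq_card X (by omega)
  have h2 : cnt V (N-1) = V.card := cnt_eq_card V (by omega)
  simp only [vset, mem_filter, mem_range]
  omega

lemma mem_vset {N : ℕ} {X V : Finset (Fin N)} {t : ℕ} :
    t ∈ vset X V ↔ t < N ∧ cnt X t < cnt V t := by
  simp [vset]

/-- at the minimal violation, the prefix counts differ by exactly one -/
lemma cnt_min_violation {N : ℕ} {X V : Finset (Fin N)} (h : (vset X V).Nonempty) :
    cnt V ((vset X V).min' h) = cnt X ((vset X V).min' h) + 1 := by
  obtain ⟨t₀, ht₀⟩ : ∃ t, (vset X V).min' h = t := ⟨_, rfl⟩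
  have hmem := mem_vset.1 ((vset X V).min'_mem h)
  have hmin : ∀ s ∈ vset X V, (vset X V).min' h ≤ s := fun s hs => (vset X V).min'_le s hs
  rw [ht₀] at hmem hmin ⊢
  rcases t₀ with _ | s
  · have := cnt_zero_le_one V
    omega
  · have hsnot : ¬ (s ∈ vset X V) := fun hmem' => by have := hmin s hmem'; omega
    rw [mem_vset] at hsnot
    push_neg at hsnot
    have hs' : cnt V s ≤ cnt X s := hsnot (by omega)
    have h1 := cnt_succ_le V s
    have h2 : cnt X s ≤ cnt X (s + 1) := cnt_mono X (by omega)
    omega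

def swapAt {N : ℕ} (X V : Finset (Fin N)) (t : ℕ) : Finset (Fin N) × Finset (Fin N) :=
  (X.filter (fun a : Fin N => (a : ℕ) ≤ t) ∪ V.filter (fun a : Fin N => ¬ (a : ℕ) ≤ t),
   V.filter (fun a : Fin N => (a : ℕ) ≤ t) ∪ X.filter (fun a : Fin N => ¬ (a : ℕ) ≤ t))

lemma swapAt_snd {N : ℕ} (X V : Finset (Fin N)) (t : ℕ) :
    (swapAt X V t).2 = (swapAt V X t).1 := rfl

lemma card_swapAt_fst {N : ℕ} (X V : Finset (Fin N)) (t : ℕ) :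
    (swapAt X V t).1.card = cnt X t + (V.card - cnt V t) := by
  unfold swapAt
  rw [card_union_of_disjoint]
  · congr 1
    have := card_filter_add_card_filter_not (s := V) (p := fun a : Fin N => (a : ℕ) ≤ t)
    unfold cnt
    omega
  · rw [disjoint_left]
    intro a ha hb
    simp only [mem_filter] at ha hb
    exact hb.2 ha.2

lemma cnt_swapAt_fst {N : ℕ} (X V : Finset (Fin N)) {s t : ℕ} (hs : s ≤ t) :
    cnt (swapAt X V t).1 s = cnt X s := by
  unfold swapAt cnt
  congr 1
  rw [filter_union]
  ext a
  simp only [mem_filter, mem_union]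
  constructor
  · rintro (⟨⟨hx, _⟩, h2⟩ | ⟨⟨_, hv⟩, h2⟩)
    · exact ⟨hx, h2⟩
    · exact absurd (h2.trans hs) hv
  · rintro ⟨hx, h2⟩
    exact Or.inl ⟨⟨hx, h2.trans hs⟩, h2⟩

lemma swapAt_swapAt {N : ℕ} (X V : Finset (Fin N)) (t : ℕ) :
    swapAt (swapAt X V t).1 (swapAt X V t).2 t = (X, V) := by
  have key : ∀ A B : Finset (Fin N),
      (A.filter (fun a : Fin N => (a : ℕ) ≤ t) ∪ B.filter (fun a : Fin N => ¬ (a : ℕ) ≤ t)).filter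
          (fun a : Fin N => (a : ℕ) ≤ t) = A.filter (fun a : Fin N => (a : ℕ) ≤ t) := by
    intro A B
    ext a
    simp only [mem_filter, mem_union]
    constructor
    · rintro ⟨⟨hx, _⟩ | ⟨_, hv⟩, h2⟩
      · exact ⟨hx, h2⟩
      · exact absurd h2 hv
    · rintro ⟨hx, h2⟩
      exact ⟨Or.inl ⟨hx, h2⟩, h2⟩
  have key2 : ∀ A B : Finset (Fin N),
      (A.filter (fun a : Fin N => (a : ℕ) ≤ t) ∪ B.filter (fun a : Fin N => ¬ (a : ℕ) ≤ t)).filter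
          (fun a : Fin N => ¬ (a : ℕ) ≤ t) = B.filter (fun a : Fin N => ¬ (a : ℕ) ≤ t) := by
    intro A B
    ext a
    simp only [mem_filter, mem_union]
    constructor
    · rintro ⟨⟨hx, h1⟩ | ⟨hv, _⟩, h2⟩
      · exact absurd h1 h2
      · exact ⟨hv, h2⟩
    · rintro ⟨hx, h2⟩
      exact ⟨Or.inr ⟨hx, h2⟩, h2⟩
  unfold swapAt
  simp only [Prod.mk.injEq]
  constructor
  · rw [key X V, key2 V X, filter_union_filter_not_eq]
  · rw [key V X, key2 X V, filter_union_filter_not_eq]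

/-- the total reflection map -/
def reflectPair {N : ℕ} (q : Finset (Fin N) × Finset (Fin N)) :
    Finset (Fin N) × Finset (Fin N) :=
  if h : (vset q.1 q.2).Nonempty then swapAt q.1 q.2 ((vset q.1 q.2).min' h) else q

lemma vset_swapAt_min {N : ℕ} {X V : Finset (Fin N)} (h : (vset X V).Nonempty) :
    ∃ h' : (vset (swapAt X V ((vset X V).min' h)).1 (swapAt X V ((vset X V).min' h)).2).Nonempty,
      (vset (swapAt X V ((vset X V).min' h)).1 (swapAt X V ((vset X V).min' h)).2).min' h'
        = (vset X V).min' h := by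
  set t₀ := (vset X V).min' h with ht₀
  have hmem := mem_vset.1 ((vset X V).min'_mem h)
  rw [← ht₀] at hmem
  have e1 : ∀ s ≤ t₀, cnt (swapAt X V t₀).1 s = cnt X s := fun s hs => cnt_swapAt_fst X V hs
  have e2 : ∀ s ≤ t₀, cnt (swapAt X V t₀).2 s = cnt V s := by
    intro s hs
    rw [swapAt_snd]
    exact cnt_swapAt_fst V X hs
  have hmem' : t₀ ∈ vset (swapAt X V t₀).1 (swapAt X V t₀).2 := by
    rw [mem_vset, e1 t₀ le_rfl, e2 t₀ le_rfl]
    exact hmem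
  refine ⟨⟨t₀, hmem'⟩, ?_⟩
  apply le_antisymm
  · exact min'_le _ _ hmem'
  · apply le_min'
    intro s hs
    by_contra hlt
    push_neg at hlt
    rw [mem_vset, e1 s (le_of_lt hlt), e2 s (le_of_lt hlt)] at hs
    have : s ∈ vset X V := mem_vset.2 hs
    have := min'_le _ _ this
    omega

lemma reflectPair_involutive {N : ℕ} {X V : Finset (Fin N)} (h : (vset X V).Nonempty) :
    reflectPair (reflectPair (X, V)) = (X, V) := by
  obtain ⟨h', hmin⟩ := vset_swapAt_min h
  have step1 : reflectPair (X, V) = swapAt X V ((vset X V).min' h) := dif_pos h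
  rw [step1, reflectPair, dif_pos h', hmin]
  exact swapAt_swapAt X V _

lemma card_reflect {N : ℕ} {X V : Finset (Fin N)} (h : (vset X V).Nonempty) :
    (reflectPair (X, V)).1.card = V.card - 1 ∧ (reflectPair (X, V)).2.card = X.card + 1 ∧
    ¬ Ballot (reflectPair (X, V)).1 (reflectPair (X, V)).2 ∧ 1 ≤ V.card := by
  have step1 : reflectPair (X, V) = swapAt X V ((vset X V).min' h) := dif_pos h
  set t₀ := (vset X V).min' h with ht₀
  have hmv := cnt_min_violation h
  rw [← ht₀] at hmv
  have h1 := cnt_le_card V t₀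
  have h2 := cnt_le_card X t₀
  have e1 : cnt (swapAt X V t₀).1 t₀ = cnt X t₀ := cnt_swapAt_fst X V le_rfl
  have e2 : cnt (swapAt X V t₀).2 t₀ = cnt V t₀ := by
    rw [swapAt_snd]; exact cnt_swapAt_fst V X le_rfl
  refine ⟨?_, ?_, ?_, by omega⟩
  · rw [step1, card_swapAt_fst]
    omega
  · rw [step1, swapAt_snd, card_swapAt_fst]
    omega
  · rw [step1]
    intro hb
    have := hb t₀
    rw [e1, e2] at this
    omega

def allPairs (N a b : ℕ) : Finset (Finset (Fin N) × Finset (Fin N)) :=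
  (univ.powersetCard a) ×ˢ (univ.powersetCard b)

lemma mem_allPairs {N a b : ℕ} {q : Finset (Fin N) × Finset (Fin N)} :
    q ∈ allPairs N a b ↔ q.1.card = a ∧ q.2.card = b := by
  simp [allPairs, Finset.mem_powersetCard_univ]

lemma card_allPairs (N a b : ℕ) : (allPairs N a b).card = N.choose a * N.choose b := by
  rw [allPairs, card_product, card_powersetCard, card_powersetCard, card_univ,
    Fintype.card_fin]

def goodPairs (N p : ℕ) : Finset (Finset (Fin N) × Finset (Fin N)) :=
  (allPairs N p p).filter fun q => Ballot q.1 q.2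

lemma goodPairs_card (N p : ℕ) (hp : 1 ≤ p) :
    (goodPairs N p).card + N.choose (p-1) * N.choose (p+1) = N.choose p * N.choose p := by
  have hsplit := card_filter_add_card_filter_not
    (s := allPairs N p p) (p := fun q => Ballot q.1 q.2)
  have hbij : ((allPairs N p p).filter fun q => ¬ Ballot q.1 q.2).card
      = (allPairs N (p-1) (p+1)).card := by
    apply card_bij' (i := fun q _ => reflectPair q) (j := fun q _ => reflectPair q)
    · -- hi : maps into target
      intro q hq
      obtain ⟨X, V⟩ := q
      rw [mem_filter, mem_allPairs] at hq
      obtain ⟨⟨hX, hV⟩, hb⟩ := hq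
      simp only [Prod.fst, Prod.snd] at hX hV hb
      have h : (vset X V).Nonempty := vset_nonempty (by omega) hb
      obtain ⟨c1, c2, _, c4⟩ := card_reflect h
      rw [mem_allPairs]
      constructor <;> omega
    · -- hj
      intro q hq
      obtain ⟨X, V⟩ := q
      rw [mem_allPairs] at hq
      obtain ⟨hX, hV⟩ := hq
      simp only [Prod.fst, Prod.snd] at hX hV
      have h : (vset X V).Nonempty := vset_nonempty' (by omega)
      obtain ⟨c1, c2, c3, c4⟩ := card_reflect h
      rw [mem_filter, mem_allPairs]
      refine ⟨⟨by omega, by omega⟩, c3⟩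
    · -- left inverse
      intro q hq
      obtain ⟨X, V⟩ := q
      rw [mem_filter, mem_allPairs] at hq
      obtain ⟨⟨hX, hV⟩, hb⟩ := hq
      simp only [Prod.fst, Prod.snd] at hX hV hb
      exact reflectPair_involutive (vset_nonempty (by omega) hb)
    · -- right inverse
      intro q hq
      obtain ⟨X, V⟩ := q
      rw [mem_allPairs] at hq
      obtain ⟨hX, hV⟩ := hq
      simp only [Prod.fst, Prod.snd] at hX hV
      exact reflectPair_involutive (vset_nonempty' (by omega))
  rw [goodPairs] at *
  rw [hbij, card_allPairs, card_allPairs] at hsplit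
  omega

lemma narayana_arith {m p : ℕ} (hp : 1 ≤ p) (hpm : p ≤ m) :
    m.choose p * m.choose p * (m+1)
      = (m+1).choose (p+1) * (m+1).choose p + m.choose (p-1) * m.choose (p+1) * (m+1) := by
  set X := m.choose p with hX
  set Y := m.choose (p+1) with hY
  set Z := m.choose (p-1) with hZ
  obtain ⟨a, ha⟩ : ∃ a, m = p + a := ⟨m - p, by omega⟩
  have f1 : Y * (p+1) = X * a := by
    have := Nat.choose_succ_right_eq m p
    rwa [show m - p = a by omega] at this
  have f2 : X * p = Z * (a + 1) := by
    have := Nat.choose_succ_right_eq m (p-1)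
    rw [show p - 1 + 1 = p by omega, show m - (p-1) = a + 1 by omega] at this
    rw [hX, hZ]
    exact this
  have f3 : (m+1).choose (p+1) = X + Y := Nat.choose_succ_succ m p
  have f4 : (m+1).choose p = Z + X := by
    have h : (m+1).choose ((p-1)+1) = m.choose (p-1) + m.choose ((p-1)+1) :=
      Nat.choose_succ_succ m (p-1)
    rw [show p - 1 + 1 = p by omega] at h
    rw [hX, hZ]
    exact h
  rw [f3, f4]
  have e1 : (X+Y)*(p+1) = X*(p+a+1) := by
    calc (X+Y)*(p+1) = X*(p+1) + Y*(p+1) := by ring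
      _ = X*(p+1) + X*a := by rw [f1]
      _ = X*(p+a+1) := by ring
  have e2 : (Z+X)*(a+1) = X*(p+a+1) := by
    calc (Z+X)*(a+1) = Z*(a+1) + X*(a+1) := by ring
      _ = X*p + X*(a+1) := by rw [← f2]
      _ = X*(p+a+1) := by ring
  have key : (X * X * (m+1)) * ((p+1)*(a+1))
      = ((X+Y)*(Z+X) + Z*Y*(m+1)) * ((p+1)*(a+1)) := by
    calc (X * X * (m+1)) * ((p+1)*(a+1))
        = X*X*(m+1)*((p+1)*(a+1)) := by ring
      _ = ((X+Y)*(p+1)) * ((Z+X)*(a+1)) + (Z*(a+1))*(Y*(p+1))*(m+1) := by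
          rw [e1, e2, ← f2, f1, ha]
          ring
      _ = ((X+Y)*(Z+X) + Z*Y*(m+1)) * ((p+1)*(a+1)) := by ring
  have hpos : 0 < (p+1)*(a+1) := by positivity
  exact Nat.eq_of_mul_eq_mul_right hpos key

lemma goodPairs_zero (m : ℕ) : (goodPairs m 0).card = 1 := by
  have hset : goodPairs m 0 = {((∅ : Finset (Fin m)), (∅ : Finset (Fin m)))} := by
    ext q
    rw [goodPairs, mem_filter, mem_allPairs, mem_singleton]
    constructor
    · rintro ⟨⟨h1, h2⟩, _⟩
      obtain ⟨X, V⟩ := q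
      simp only [Prod.fst, Prod.snd] at h1 h2
      rw [card_eq_zero] at h1 h2
      rw [h1, h2]
    · rintro rfl
      refine ⟨⟨by simp, by simp⟩, fun t => ?_⟩
      simp [cnt]
  rw [hset, card_singleton]

/-- the master counting result for ballot pairs -/
lemma goodPairs_count (m p : ℕ) (hpm : p ≤ m) :
    (goodPairs m p).card * (m+1) = (m+1).choose (p+1) * (m+1).choose p := by
  rcases Nat.eq_zero_or_pos p with rfl | hp
  · rw [goodPairs_zero, one_mul, Nat.choose_one_right, Nat.choose_zero_right, mul_one]
  · have h1 := goodPairs_card m p hp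
    have h2 := narayana_arith hp hpm
    have h3 : (goodPairs m p).card * (m+1) + m.choose (p-1) * m.choose (p+1) * (m+1)
        = m.choose p * m.choose p * (m+1) := by rw [← h1]; ring
    linarith

/-! ### generic facts about the `j`-th smallest element of a finset -/

section Sorted

variable {α : Type*} [LinearOrder α]

lemma card_filter_le_orderIsoOfFin (s : Finset α) {k : ℕ} (h : s.card = k) (j : Fin k) :
    (s.filter (fun u => u ≤ (s.orderIsoOfFin h j : α))).card = (j : ℕ) + 1 := by
  classical
  have himg : s.filter (fun u => u ≤ (s.orderIsoOfFin h j : α))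
      = (univ.filter (fun j' : Fin k => j' ≤ j)).image (fun j' => (s.orderIsoOfFin h j' : α)) := by
    ext u
    simp only [mem_filter, mem_image, mem_univ, true_and]
    constructor
    · rintro ⟨hu, hle⟩
      refine ⟨(s.orderIsoOfFin h).symm ⟨u, hu⟩, ?_, ?_⟩
      · rw [← (s.orderIsoOfFin h).le_iff_le]
        simp only [OrderIso.apply_symm_apply]; exact hle
      · simp
    · rintro ⟨j', hj', rfl⟩
      exact ⟨(s.orderIsoOfFin h j').2, by simpa using (s.orderIsoOfFin h).monotone hj'⟩
  rw [himg, card_image_of_injective _ (fun a b hab => by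
    have := (s.orderIsoOfFin h).injective (Subtype.ext hab)
    exact this)]
  have : univ.filter (fun j' : Fin k => j' ≤ j) = Finset.Iic j := by
    ext j'; simp
  rw [this, Fin.card_Iic]

lemma eq_of_card_filter_le_eq {s : Finset α} {u w : α} (hu : u ∈ s) (hw : w ∈ s)
    (h : (s.filter (fun x => x ≤ u)).card = (s.filter (fun x => x ≤ w)).card) : u = w := by
  classical
  rcases lt_trichotomy u w with hlt | he | hlt
  · exfalso
    have hsub : s.filter (fun x => x ≤ u) ⊆ s.filter (fun x => x ≤ w) := by
      intro x hx
      simp only [mem_filter] at hx ⊢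
      exact ⟨hx.1, hx.2.trans (le_of_lt hlt)⟩
    have hmem : w ∈ s.filter (fun x => x ≤ w) := by simp [hw]
    have hnot : w ∉ s.filter (fun x => x ≤ u) := by
      simp only [mem_filter, not_and, not_le]
      exact fun _ => hlt
    have := card_lt_card ⟨hsub, fun hs => hnot (hs hmem)⟩
    omega
  · exact he
  · exfalso
    have hsub : s.filter (fun x => x ≤ w) ⊆ s.filter (fun x => x ≤ u) := by
      intro x hx
      simp only [mem_filter] at hx ⊢
      exact ⟨hx.1, hx.2.trans (le_of_lt hlt)⟩
    have hmem : u ∈ s.filter (fun x => x ≤ u) := by simp [hu]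
    have hnot : u ∉ s.filter (fun x => x ≤ w) := by
      simp only [mem_filter, not_and, not_le]
      exact fun _ => hlt
    have := card_lt_card ⟨hsub, fun hs => hnot (hs hmem)⟩
    omega

end Sorted

/-! ### monotone maps with `i ≤ f i` -/

def GoodFun {n : ℕ} (f : Fin n → Fin n) : Prop := Monotone f ∧ ∀ i, i ≤ f i

variable {m : ℕ}

def ascSet (f : Fin (m+1) → Fin (m+1)) : Finset (Fin m) :=
  univ.filter (fun i : Fin m => f i.castSucc < f i.succ)

def valSet (f : Fin (m+1) → Fin (m+1)) : Finset (Fin m) :=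
  univ.filter (fun v : Fin m => v.castSucc ∈ image f univ)

lemma goodFun_last {f : Fin (m+1) → Fin (m+1)} (hf : GoodFun f) :
    f (Fin.last m) = Fin.last m :=
  le_antisymm (Fin.le_last _) (hf.2 _)

lemma valSet_image {f : Fin (m+1) → Fin (m+1)} :
    (valSet f).image Fin.castSucc = (image f univ).erase (Fin.last m) := by
  ext w
  simp only [valSet, mem_image, mem_filter, mem_univ, true_and, mem_erase]
  constructor
  · rintro ⟨v, hv, rfl⟩
    exact ⟨Fin.ne_of_lt (Fin.castSucc_lt_last v), hv⟩
  · rintro ⟨hne, hw⟩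
    obtain ⟨v, rfl⟩ := Fin.exists_castSucc_eq.2 hne
    exact ⟨v, hw, rfl⟩

lemma card_image_f {f : Fin (m+1) → Fin (m+1)} (hf : GoodFun f) :
    (image f univ).card = (valSet f).card + 1 := by
  have hlast : Fin.last m ∈ image f univ :=
    mem_image.2 ⟨Fin.last m, mem_univ _, goodFun_last hf⟩
  rw [← card_erase_add_one hlast, ← valSet_image,
    card_image_of_injective _ (Fin.castSucc_injective m)]

noncomputable def lastPre (f : Fin (m+1) → Fin (m+1)) (w : Fin (m+1)) : Fin (m+1) :=
  if h : (univ.filter (fun j => f j = w)).Nonempty then (univ.filter (fun j => f j = w)).max' h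
  else 0

lemma lastPre_eq {f : Fin (m+1) → Fin (m+1)} {w : Fin (m+1)} (hw : w ∈ image f univ) :
    f (lastPre f w) = w := by
  have hne : (univ.filter (fun j => f j = w)).Nonempty := by
    obtain ⟨j, _, hj⟩ := mem_image.1 hw
    exact ⟨j, by simp [hj]⟩
  rw [lastPre, dif_pos hne]
  have := (univ.filter (fun j => f j = w)).max'_mem hne
  simpa using this

lemma lastPre_ge {f : Fin (m+1) → Fin (m+1)} {w : Fin (m+1)} (hw : w ∈ image f univ)
    {j : Fin (m+1)} (hj : f j = w) : j ≤ lastPre f w := by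
  have hne : (univ.filter (fun j => f j = w)).Nonempty := by
    obtain ⟨j', _, hj'⟩ := mem_image.1 hw
    exact ⟨j', by simp [hj']⟩
  rw [lastPre, dif_pos hne]
  exact le_max' _ j (by simp [hj])

noncomputable def ascOf (f : Fin (m+1) → Fin (m+1)) (v : Fin m) : Fin m :=
  if h : (lastPre f v.castSucc).val < m then ⟨(lastPre f v.castSucc).val, h⟩ else v

lemma ascOf_spec {f : Fin (m+1) → Fin (m+1)} (hf : GoodFun f) {v : Fin m}
    (hv : v ∈ valSet f) :
    Fin.castSucc (ascOf f v) = lastPre f v.castSucc ∧ ascOf f v ∈ ascSet f ∧ ascOf f v ≤ v := by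
  have hw : v.castSucc ∈ image f univ := (mem_filter.1 hv).2
  set j₀ := lastPre f v.castSucc with hj₀
  have hfj₀ : f j₀ = v.castSucc := lastPre_eq hw
  have hlt : j₀.val < m := by
    by_contra hge
    have : j₀ = Fin.last m := Fin.ext (by have := j₀.isLt; simp [Fin.last]; omega)
    rw [this, goodFun_last hf] at hfj₀
    exact absurd hfj₀.symm (Fin.ne_of_lt (Fin.castSucc_lt_last v))
  have hdef : ascOf f v = ⟨j₀.val, hlt⟩ := dif_pos hlt
  have hcs : Fin.castSucc (ascOf f v) = j₀ := by
    rw [hdef]; exact Fin.ext rfl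
  refine ⟨hcs, ?_, ?_⟩
  · rw [ascSet, mem_filter]
    refine ⟨mem_univ _, ?_⟩
    rw [hcs, hfj₀]
    have h1 : j₀ < (ascOf f v).succ := by
      rw [← hcs]; exact Fin.castSucc_lt_succ
    have h2 : v.castSucc ≤ f (ascOf f v).succ := by
      rw [← hfj₀]; exact hf.1 (le_of_lt h1)
    rcases lt_or_eq_of_le h2 with h | h
    · exact h
    · exfalso
      have := lastPre_ge hw h.symm
      rw [← hj₀] at this
      exact absurd (lt_of_lt_of_le h1 this) (lt_irrefl j₀)
  · have : Fin.castSucc (ascOf f v) ≤ v.castSucc := by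
      rw [hcs, ← hfj₀]
      exact hf.2 j₀
    exact Fin.castSucc_le_castSucc_iff.1 this

lemma ascOf_val {f : Fin (m+1) → Fin (m+1)} (hf : GoodFun f) {v : Fin m}
    (hv : v ∈ valSet f) : f (Fin.castSucc (ascOf f v)) = v.castSucc := by
  rw [(ascOf_spec hf hv).1]
  exact lastPre_eq (mem_filter.1 hv).2

lemma ascOf_injOn {f : Fin (m+1) → Fin (m+1)} (hf : GoodFun f) {v v' : Fin m}
    (hv : v ∈ valSet f) (hv' : v' ∈ valSet f) (h : ascOf f v = ascOf f v') : v = v' := by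
  have h1 := ascOf_val hf hv
  have h2 := ascOf_val hf hv'
  rw [h] at h1
  exact Fin.castSucc_injective m (h1 ▸ h2 ▸ rfl)

lemma ascOf_surj {f : Fin (m+1) → Fin (m+1)} (hf : GoodFun f) {i : Fin m}
    (hi : i ∈ ascSet f) : ∃ v ∈ valSet f, ascOf f v = i := by
  have hasc : f i.castSucc < f i.succ := (mem_filter.1 hi).2
  have hne : f i.castSucc ≠ Fin.last m := by
    intro h
    have := lt_of_lt_of_le hasc (Fin.le_last _)
    rw [h] at this
    exact absurd this (lt_irrefl _)
  obtain ⟨v, hv⟩ := Fin.exists_castSucc_eq.2 hne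
  have hwim : v.castSucc ∈ image f univ := by
    rw [hv]; exact mem_image.2 ⟨i.castSucc, mem_univ _, rfl⟩
  have hvmem : v ∈ valSet f := mem_filter.2 ⟨mem_univ _, hwim⟩
  refine ⟨v, hvmem, ?_⟩
  have hmax : lastPre f v.castSucc = i.castSucc := by
    apply le_antisymm
    · have := lastPre_eq hwim
      by_contra hgt
      push_neg at hgt
      have hge : i.succ ≤ lastPre f v.castSucc := hgt
      have : f i.succ ≤ f (lastPre f v.castSucc) := hf.1 hge
      rw [lastPre_eq hwim, hv] at this
      exact absurd (lt_of_lt_of_le hasc this) (lt_irrefl _)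
    · exact lastPre_ge hwim (by rw [hv])
  have := (ascOf_spec hf hvmem).1
  rw [hmax] at this
  exact Fin.castSucc_injective m this

lemma card_ascSet {f : Fin (m+1) → Fin (m+1)} (hf : GoodFun f) :
    (ascSet f).card = (valSet f).card := by
  symm
  apply card_bij (fun v _ => ascOf f v)
  · intro v hv; exact (ascOf_spec hf hv).2.1
  · intro v hv v' hv' h; exact ascOf_injOn hf hv hv' h
  · intro i hi
    obtain ⟨v, hv, he⟩ := ascOf_surj hf hi
    exact ⟨v, hv, he⟩

lemma ballot_ascSet_valSet {f : Fin (m+1) → Fin (m+1)} (hf : GoodFun f) :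
    Ballot (ascSet f) (valSet f) := by
  intro t
  apply card_le_card_of_injOn (ascOf f)
  · intro v hv
    rw [mem_coe, mem_filter] at hv ⊢
    refine ⟨(ascOf_spec hf hv.1).2.1, ?_⟩
    have := (ascOf_spec hf hv.1).2.2
    have hvt := hv.2
    rw [Fin.le_def] at this
    omega
  · intro v hv v' hv' h
    rw [coe_filter] at hv hv'
    exact ascOf_injOn hf hv.1 hv'.1 h

/-! ### the inverse construction -/

def Wset (V : Finset (Fin m)) : Finset (Fin (m+1)) :=
  insert (Fin.last m) (V.image Fin.castSucc)

lemma last_not_mem_image (V : Finset (Fin m)) : Fin.last m ∉ V.image Fin.castSucc := by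
  intro h
  obtain ⟨v, _, he⟩ := mem_image.1 h
  exact absurd he (Fin.ne_of_lt (Fin.castSucc_lt_last v))

lemma card_Wset (V : Finset (Fin m)) : (Wset V).card = V.card + 1 := by
  rw [Wset, card_insert_of_notMem (last_not_mem_image V),
    card_image_of_injective _ (Fin.castSucc_injective m)]

def rnk (X : Finset (Fin m)) (i : Fin (m+1)) : ℕ :=
  (X.filter (fun x : Fin m => x.castSucc < i)).card

lemma rnk_le (X : Finset (Fin m)) (i : Fin (m+1)) : rnk X i ≤ X.card :=
  card_le_card (filter_subset _ _)

lemma rnk_mono (X : Finset (Fin m)) {i i' : Fin (m+1)} (h : i ≤ i') : rnk X i ≤ rnk X i' := by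
  apply card_le_card
  intro x hx
  rw [mem_filter] at hx ⊢
  exact ⟨hx.1, lt_of_lt_of_le hx.2 h⟩

lemma rnk_zero (X : Finset (Fin m)) : rnk X 0 = 0 := by
  rw [rnk, card_eq_zero]
  ext x
  simp only [mem_filter, notMem_empty, iff_false, not_and]
  intro _
  exact fun h => absurd h (by simp [Fin.lt_def])

lemma rnk_last (X : Finset (Fin m)) : rnk X (Fin.last m) = X.card := by
  rw [rnk, filter_true_of_mem]
  intro x _
  exact Fin.castSucc_lt_last x

lemma rnk_succ (X : Finset (Fin m)) (i : Fin m) :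
    rnk X i.succ = rnk X i.castSucc + (if i ∈ X then 1 else 0) := by
  have hiff : ∀ x : Fin m, (x.castSucc < i.succ ↔ (x.castSucc < i.castSucc ∨ x = i)) := by
    intro x
    rw [Fin.castSucc_lt_succ_iff, Fin.castSucc_lt_castSucc_iff]
    constructor
    · intro h
      rcases lt_or_eq_of_le h with h | h
      · exact Or.inl h
      · exact Or.inr h
    · rintro (h | rfl)
      · exact le_of_lt h
      · exact le_rfl
  by_cases hi : i ∈ X
  · rw [if_pos hi]
    have hins : X.filter (fun x : Fin m => x.castSucc < i.succ)
        = insert i (X.filter (fun x : Fin m => x.castSucc < i.castSucc)) := by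
      ext x
      simp only [mem_filter, mem_insert]
      rw [hiff x]
      constructor
      · rintro ⟨hx, h | h⟩
        · exact Or.inr ⟨hx, h⟩
        · exact Or.inl h
      · rintro (rfl | ⟨hx, h⟩)
        · exact ⟨hi, Or.inr rfl⟩
        · exact ⟨hx, Or.inl h⟩
    rw [rnk, hins, card_insert_of_notMem, rnk]
    intro h
    exact absurd (mem_filter.1 h).2 (lt_irrefl _)
  · rw [if_neg hi, add_zero, rnk, rnk]
    congr 1
    ext x
    simp only [mem_filter]
    rw [hiff x]
    constructor
    · rintro ⟨hx, h | rfl⟩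
      · exact ⟨hx, h⟩
      · exact absurd hx hi
    · rintro ⟨hx, h⟩
      exact ⟨hx, Or.inl h⟩

lemma rnk_surj (X : Finset (Fin m)) {j : ℕ} (hj : j ≤ X.card) : ∃ i, rnk X i = j := by
  have key : ∀ i : Fin (m+1), ∀ j ≤ rnk X i, ∃ i', rnk X i' = j := by
    intro i
    induction i using Fin.induction with
    | zero =>
      intro j hj
      rw [rnk_zero] at hj
      exact ⟨0, by rw [rnk_zero]; omega⟩
    | succ i ih =>
      intro j hj
      rw [rnk_succ] at hj
      by_cases h : j ≤ rnk X i.castSucc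
      · exact ih j h
      · by_cases hX : i ∈ X
        · refine ⟨i.succ, ?_⟩
          rw [rnk_succ, if_pos hX]
          rw [if_pos hX] at hj
          omega
        · rw [if_neg hX] at hj
          exact absurd (by omega : j ≤ rnk X i.castSucc) h
  have := key (Fin.last m)
  rw [rnk_last] at this
  exact this j hj

noncomputable def psiFun (X V : Finset (Fin m)) : Fin (m+1) → Fin (m+1) := fun i =>
  if h : rnk X i < (Wset V).card then ((Wset V).orderIsoOfFin rfl ⟨rnk X i, h⟩ : Fin (m+1))
  else Fin.last m

section Psi

variable {X V : Finset (Fin m)} (hc : X.card ≤ V.card)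
include hc

lemma rnk_lt_Wcard (i : Fin (m+1)) : rnk X i < (Wset V).card := by
  rw [card_Wset]
  have := rnk_le X i
  omega

lemma psiFun_eq (i : Fin (m+1)) :
    psiFun X V i = ((Wset V).orderIsoOfFin rfl ⟨rnk X i, rnk_lt_Wcard hc i⟩ : Fin (m+1)) :=
  dif_pos _

lemma psiFun_mem (i : Fin (m+1)) : psiFun X V i ∈ Wset V := by
  rw [psiFun_eq hc]
  exact ((Wset V).orderIsoOfFin rfl _).2

lemma psiFun_cnt (i : Fin (m+1)) :
    ((Wset V).filter (fun u => u ≤ psiFun X V i)).card = rnk X i + 1 := by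
  rw [psiFun_eq hc]
  exact card_filter_le_orderIsoOfFin (Wset V) rfl _

lemma psiFun_mono : Monotone (psiFun X V) := by
  intro i i' h
  rw [psiFun_eq hc, psiFun_eq hc]
  have h1 : (⟨rnk X i, rnk_lt_Wcard hc i⟩ : Fin (Wset V).card)
      ≤ ⟨rnk X i', rnk_lt_Wcard hc i'⟩ := Fin.mk_le_mk.2 (rnk_mono X h)
  have h2 := ((Wset V).orderIsoOfFin rfl).monotone h1
  exact Subtype.coe_le_coe.2 h2

lemma psiFun_le (hB : Ballot X V) (i : Fin (m+1)) : i ≤ psiFun X V i := by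
  by_contra hlt
  push_neg at hlt
  set w := psiFun X V i with hw
  have hcnt := psiFun_cnt hc i
  rw [← hw] at hcnt
  have hsub : (Wset V).filter (fun u => u ≤ w)
      ⊆ (V.filter (fun v : Fin m => (v : ℕ) ≤ (w : ℕ))).image Fin.castSucc := by
    intro u hu
    rw [mem_filter] at hu
    have hne : u ≠ Fin.last m := by
      intro h
      have h1 : u < Fin.last m := lt_of_le_of_lt hu.2 (lt_of_lt_of_le hlt (Fin.le_last i))
      rw [h] at h1
      exact absurd h1 (lt_irrefl _)
    have humem : u ∈ V.image Fin.castSucc := by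
      rcases mem_insert.1 hu.1 with h | h
      · exact absurd h hne
      · exact h
    obtain ⟨v, hv, rfl⟩ := mem_image.1 humem
    exact mem_image.2 ⟨v, mem_filter.2 ⟨hv, by exact_mod_cast hu.2⟩, rfl⟩
  have h1 : rnk X i + 1 ≤ cnt V (w : ℕ) := by
    rw [← hcnt, cnt]
    calc ((Wset V).filter (fun u => u ≤ w)).card
        ≤ ((V.filter (fun v : Fin m => (v : ℕ) ≤ (w : ℕ))).image Fin.castSucc).card :=
          card_le_card hsub
      _ = (V.filter (fun v : Fin m => (v : ℕ) ≤ (w : ℕ))).card :=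
          card_image_of_injective _ (Fin.castSucc_injective m)
  have h2 : cnt X (w : ℕ) ≤ rnk X i := by
    apply card_le_card
    intro x hx
    rw [mem_filter] at hx ⊢
    refine ⟨hx.1, ?_⟩
    have hxw : (x : ℕ) ≤ (w : ℕ) := hx.2
    have hwi : (w : ℕ) < (i : ℕ) := hlt
    rw [Fin.lt_def]
    simp only [Fin.coe_castSucc]
    omega
  have := hB (w : ℕ)
  omega

end Psi

lemma psiFun_image {X V : Finset (Fin m)} (he : X.card = V.card) :
    image (psiFun X V) univ = Wset V := by
  have hc : X.card ≤ V.card := le_of_eq he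
  apply Finset.Subset.antisymm
  · intro w hw
    obtain ⟨i, _, rfl⟩ := mem_image.1 hw
    exact psiFun_mem hc i
  · intro w hw
    set j := ((Wset V).orderIsoOfFin rfl).symm ⟨w, hw⟩ with hj
    have hjle : (j : ℕ) ≤ X.card := by
      have h2 : (Wset V).card = X.card + 1 := by rw [card_Wset, he]
      have h3 := j.isLt
      omega
    obtain ⟨i, hi⟩ := rnk_surj X hjle
    refine mem_image.2 ⟨i, mem_univ _, ?_⟩
    rw [psiFun_eq hc]
    have : (⟨rnk X i, rnk_lt_Wcard hc i⟩ : Fin (Wset V).card) = j := Fin.ext hi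
    rw [this, hj]
    simp

lemma ascSet_psiFun {X V : Finset (Fin m)} (he : X.card = V.card) :
    ascSet (psiFun X V) = X := by
  have hc : X.card ≤ V.card := le_of_eq he
  ext i
  rw [ascSet, mem_filter]
  simp only [mem_univ, true_and]
  rw [psiFun_eq hc, psiFun_eq hc]
  have key : ∀ a b : Fin (Wset V).card,
      (((((Wset V).orderIsoOfFin rfl) a : {x // x ∈ Wset V}) : Fin (m+1))
        < ((((Wset V).orderIsoOfFin rfl) b : {x // x ∈ Wset V}) : Fin (m+1))) ↔ a < b := by
    intro a b
    rw [Subtype.coe_lt_coe, OrderIso.lt_iff_lt]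
  rw [key]
  rw [Fin.mk_lt_mk, rnk_succ]
  by_cases hX : i ∈ X
  · simp [hX]
  · simp [hX]

lemma valSet_psiFun {X V : Finset (Fin m)} (he : X.card = V.card) :
    valSet (psiFun X V) = V := by
  ext v
  rw [valSet, mem_filter]
  simp only [mem_univ, true_and]
  rw [psiFun_image he, Wset, mem_insert]
  constructor
  · rintro (h | h)
    · exact absurd h (Fin.ne_of_lt (Fin.castSucc_lt_last v))
    · obtain ⟨v', hv', hee⟩ := mem_image.1 h
      rwa [← Fin.castSucc_injective m hee]
  · intro h
    exact Or.inr (mem_image.2 ⟨v, h, rfl⟩)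

lemma Wset_valSet {f : Fin (m+1) → Fin (m+1)} (hf : GoodFun f) :
    Wset (valSet f) = image f univ := by
  rw [Wset, valSet_image, insert_erase]
  exact mem_image.2 ⟨Fin.last m, mem_univ _, goodFun_last hf⟩

lemma count_image_f {f : Fin (m+1) → Fin (m+1)} (hf : GoodFun f) (i : Fin (m+1)) :
    ((image f univ).filter (fun u => u ≤ f i)).card = rnk (ascSet f) i + 1 := by
  induction i using Fin.induction with
  | zero =>
    rw [rnk_zero]
    have : (image f univ).filter (fun u => u ≤ f 0) = {f 0} := by
      ext w
      rw [mem_filter, mem_singleton]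
      constructor
      · rintro ⟨hw, hle⟩
        obtain ⟨j, _, rfl⟩ := mem_image.1 hw
        exact le_antisymm hle (hf.1 (Fin.zero_le j))
      · rintro rfl
        exact ⟨mem_image.2 ⟨0, mem_univ _, rfl⟩, le_rfl⟩
    rw [this, card_singleton]
  | succ i ih =>
    by_cases hasc : f i.castSucc < f i.succ
    · have hmem : i ∈ ascSet f := mem_filter.2 ⟨mem_univ _, hasc⟩
      have hins : (image f univ).filter (fun u => u ≤ f i.succ)
          = insert (f i.succ) ((image f univ).filter (fun u => u ≤ f i.castSucc)) := by
        ext w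
        rw [mem_filter, mem_insert, mem_filter]
        constructor
        · rintro ⟨hw, hle⟩
          obtain ⟨j, _, rfl⟩ := mem_image.1 hw
          rcases le_or_gt j i.castSucc with h | h
          · exact Or.inr ⟨hw, hf.1 h⟩
          · have : i.succ ≤ j := by
              rw [Fin.le_def]
              rw [Fin.lt_def] at h
              simp only [Fin.val_succ, Fin.coe_castSucc] at h ⊢
              omega
            exact Or.inl (le_antisymm hle (hf.1 this))
        · rintro (rfl | ⟨hw, hle⟩)
          · exact ⟨mem_image.2 ⟨i.succ, mem_univ _, rfl⟩, le_rfl⟩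
          · exact ⟨hw, hle.trans (le_of_lt hasc)⟩
      rw [hins, card_insert_of_notMem, ih, rnk_succ, if_pos hmem]
      intro h
      exact absurd (mem_filter.1 h).2 (not_le.2 hasc)
    · have hnmem : i ∉ ascSet f := fun h => absurd (mem_filter.1 h).2 hasc
      have heq : f i.succ = f i.castSucc :=
        le_antisymm (not_lt.1 hasc) (hf.1 (le_of_lt (Fin.castSucc_lt_succ (i := i))))
      rw [heq, ih, rnk_succ, if_neg hnmem, add_zero]

lemma psiFun_roundtrip {f : Fin (m+1) → Fin (m+1)} (hf : GoodFun f) :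
    psiFun (ascSet f) (valSet f) = f := by
  have hc : (ascSet f).card ≤ (valSet f).card := le_of_eq (card_ascSet hf)
  funext i
  apply eq_of_card_filter_le_eq (s := Wset (valSet f))
  · exact psiFun_mem hc i
  · rw [Wset_valSet hf]
    exact mem_image.2 ⟨i, mem_univ _, rfl⟩
  · rw [psiFun_cnt hc i]
    have := count_image_f hf i
    rw [← Wset_valSet hf] at this
    rw [this]

lemma monoFun_count (m p : ℕ) :
    (univ.filter (fun f : Fin (m+1) → Fin (m+1) =>
        GoodFun f ∧ (image f univ).card = p + 1)).card = (goodPairs m p).card := by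
  apply card_bij (fun f _ => (ascSet f, valSet f))
  · intro f hf
    rw [mem_filter] at hf
    obtain ⟨-, hgood, hcard⟩ := hf
    rw [goodPairs, mem_filter, mem_allPairs]
    have h1 := card_image_f hgood
    have h2 := card_ascSet hgood
    refine ⟨⟨?_, ?_⟩, ballot_ascSet_valSet hgood⟩
    · simp only [Prod.fst]
      omega
    · simp only [Prod.snd]
      omega
  · intro f hf g hg h
    rw [mem_filter] at hf hg
    have h1 : ascSet f = ascSet g := congrArg Prod.fst h
    have h2 : valSet f = valSet g := congrArg Prod.snd h
    rw [← psiFun_roundtrip hf.2.1, ← psiFun_roundtrip hg.2.1, h1, h2]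
  · rintro ⟨X, V⟩ hq
    rw [goodPairs, mem_filter, mem_allPairs] at hq
    obtain ⟨⟨hX, hV⟩, hB⟩ := hq
    simp only [Prod.fst, Prod.snd] at hX hV hB
    have he : X.card = V.card := by omega
    refine ⟨psiFun X V, ?_, ?_⟩
    · rw [mem_filter]
      refine ⟨mem_univ _, ⟨psiFun_mono (le_of_eq he), psiFun_le (le_of_eq he) hB⟩, ?_⟩
      rw [psiFun_image he, card_Wset, hV]
    · rw [ascSet_psiFun he, valSet_psiFun he]

lemma monoFun_natcard (m p : ℕ) :
    Nat.card {f : Fin (m+1) → Fin (m+1) // GoodFun f ∧ (image f univ).card = p + 1}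
      = (goodPairs m p).card := by
  rw [Nat.card_eq_fintype_card, Fintype.card_subtype]
  exact monoFun_count m p

/-! ### graphs from monotone functions -/

def graphOf {n : ℕ} (f : Fin n → Fin n) : SimpleGraph (Fin n) :=
  SimpleGraph.fromRel (fun i j => i < j ∧ j ≤ f i)

lemma graphOf_adj {n : ℕ} (f : Fin n → Fin n) (i j : Fin n) :
    (graphOf f).Adj i j ↔ i ≠ j ∧ ((i < j ∧ j ≤ f i) ∨ (j < i ∧ i ≤ f j)) := by
  rw [graphOf, SimpleGraph.fromRel_adj]

lemma graphOf_adj' {n : ℕ} {f : Fin n → Fin n} {i j : Fin n} (hij : i < j) :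
    (graphOf f).Adj i j ↔ j ≤ f i := by
  rw [graphOf_adj]
  constructor
  · rintro ⟨_, ⟨_, h⟩ | ⟨h1, _⟩⟩
    · exact h
    · exact absurd hij (not_lt.2 (le_of_lt h1))
  · intro h
    exact ⟨ne_of_lt hij, Or.inl ⟨hij, h⟩⟩

lemma intervalClique_graphOf {n : ℕ} {f : Fin n → Fin n} (hf : GoodFun f) :
    IntervalClique (graphOf f) := by
  intro i j k l hij hadj hik hkj hil hlj hkl
  have hjf : j ≤ f i := (graphOf_adj' hij).1 hadj
  have key : ∀ x y : Fin n, i ≤ x → x < y → y ≤ j → (graphOf f).Adj x y := by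
    intro x y hx hxy hy
    rw [graphOf_adj' hxy]
    calc y ≤ j := hy
      _ ≤ f i := hjf
      _ ≤ f x := hf.1 hx
  rcases lt_trichotomy k l with h | h | h
  · exact key k l hik h hlj
  · exact absurd h hkl
  · exact (key l k hil h hkj).symm

noncomputable def fOf {n : ℕ} (G : SimpleGraph (Fin n)) (i : Fin n) : Fin n :=
  (insert i (G.neighborFinset i)).max' ⟨i, mem_insert_self i _⟩

lemma le_fOf {n : ℕ} (G : SimpleGraph (Fin n)) (i : Fin n) : i ≤ fOf G i :=
  le_max' _ i (mem_insert_self i _)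

lemma adj_le_fOf {n : ℕ} {G : SimpleGraph (Fin n)} {i j : Fin n} (h : G.Adj i j) :
    j ≤ fOf G i :=
  le_max' _ j (mem_insert_of_mem ((SimpleGraph.mem_neighborFinset G i j).2 h))

lemma fOf_eq_or_adj {n : ℕ} (G : SimpleGraph (Fin n)) (i : Fin n) :
    fOf G i = i ∨ G.Adj i (fOf G i) := by
  have := (insert i (G.neighborFinset i)).max'_mem ⟨i, mem_insert_self i _⟩
  rcases mem_insert.1 this with h | h
  · exact Or.inl h
  · exact Or.inr ((SimpleGraph.mem_neighborFinset G i _).1 h)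

lemma fOf_mono {n : ℕ} {G : SimpleGraph (Fin n)} (hG : IntervalClique G) :
    Monotone (fOf G) := by
  intro i i' h
  rcases fOf_eq_or_adj G i with he | ha
  · rw [he]
    exact h.trans (le_fOf G i')
  · rcases le_or_gt (fOf G i) i' with h1 | h1
    · exact h1.trans (le_fOf G i')
    · have him : i < fOf G i := lt_of_le_of_lt h h1
      rcases eq_or_lt_of_le h with rfl | hii'
      · exact le_rfl
      · have : G.Adj i' (fOf G i) := hG i (fOf G i) i' (fOf G i) him ha (le_of_lt hii')
          (le_of_lt h1) (le_of_lt him) le_rfl (ne_of_lt h1)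
        exact adj_le_fOf this

lemma goodFun_fOf {n : ℕ} {G : SimpleGraph (Fin n)} (hG : IntervalClique G) :
    GoodFun (fOf G) :=
  ⟨fOf_mono hG, le_fOf G⟩

lemma graphOf_fOf {n : ℕ} {G : SimpleGraph (Fin n)} (hG : IntervalClique G) :
    graphOf (fOf G) = G := by
  have key : ∀ i j : Fin n, i < j → ((graphOf (fOf G)).Adj i j ↔ G.Adj i j) := by
    intro i j hij
    rw [graphOf_adj' hij]
    constructor
    · intro hle
      rcases fOf_eq_or_adj G i with he | ha
      · rw [he] at hle
        exact absurd (lt_of_lt_of_le hij hle) (lt_irrefl i)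
      · rcases eq_or_lt_of_le hle with rfl | hlt
        · exact ha
        · have him : i < fOf G i := lt_of_lt_of_le hij hle
          exact hG i (fOf G i) i j him ha le_rfl (le_of_lt him) (le_of_lt hij) hle
            (ne_of_lt hij)
    · exact adj_le_fOf
  ext i j
  rcases lt_trichotomy i j with h | rfl | h
  · exact key i j h
  · constructor
    · intro h
      exact absurd rfl (SimpleGraph.ne_of_adj _ h)
    · intro h
      exact absurd rfl (SimpleGraph.ne_of_adj _ h)
  · constructor
    · intro ha
      exact ((key j i h).1 ha.symm).symm
    · intro ha
      exact ((key j i h).2 ha.symm).symm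

lemma fOf_graphOf {n : ℕ} {f : Fin n → Fin n} (hf : GoodFun f) :
    fOf (graphOf f) = f := by
  funext i
  apply le_antisymm
  · apply max'_le
    intro u hu
    rcases mem_insert.1 hu with rfl | hu
    · exact hf.2 u
    · have hadj := (SimpleGraph.mem_neighborFinset _ i u).1 hu
      rcases (graphOf_adj f i u).1 hadj with ⟨_, ⟨_, h⟩ | ⟨h1, h2⟩⟩
      · exact h
      · exact (le_of_lt h1).trans (hf.2 i)
  · rcases eq_or_lt_of_le (hf.2 i) with he | hlt
    · rw [← he]
      exact le_fOf _ i
    · apply le_max'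
      apply mem_insert_of_mem
      rw [SimpleGraph.mem_neighborFinset]
      exact (graphOf_adj' hlt).2 le_rfl

/-! ### maximal cliques of `graphOf f` -/

noncomputable def minPre (f : Fin (m+1) → Fin (m+1)) (v : Fin (m+1)) : Fin (m+1) :=
  if h : (univ.filter (fun j => f j = v)).Nonempty then (univ.filter (fun j => f j = v)).min' h
  else 0

lemma minPre_eq {f : Fin (m+1) → Fin (m+1)} {v : Fin (m+1)} (hv : v ∈ image f univ) :
    f (minPre f v) = v := by
  have hne : (univ.filter (fun j => f j = v)).Nonempty := by
    obtain ⟨j, _, hj⟩ := mem_image.1 hv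
    exact ⟨j, by simp [hj]⟩
  rw [minPre, dif_pos hne]
  have := (univ.filter (fun j => f j = v)).min'_mem hne
  simpa using this

lemma minPre_le {f : Fin (m+1) → Fin (m+1)} {v : Fin (m+1)} (hv : v ∈ image f univ)
    {j : Fin (m+1)} (hj : f j = v) : minPre f v ≤ j := by
  have hne : (univ.filter (fun j => f j = v)).Nonempty := by
    obtain ⟨j', _, hj'⟩ := mem_image.1 hv
    exact ⟨j', by simp [hj']⟩
  rw [minPre, dif_pos hne]
  exact min'_le _ j (by simp [hj])

lemma isClique_Icc {f : Fin (m+1) → Fin (m+1)} (hf : GoodFun f) {a v : Fin (m+1)}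
    (hav : v ≤ f a) : (graphOf f).IsClique (↑(Finset.Icc a v) : Set (Fin (m+1))) := by
  intro x hx y hy hne
  simp only [coe_Icc, Set.mem_Icc] at hx hy
  have key : ∀ x y : Fin (m+1), a ≤ x → x < y → y ≤ v → (graphOf f).Adj x y := by
    intro x y h1 h2 h3
    rw [graphOf_adj' h2]
    calc y ≤ v := h3
      _ ≤ f a := hav
      _ ≤ f x := hf.1 h1
  rcases lt_trichotomy x y with h | h | h
  · exact key x y hx.1 h hy.2
  · exact absurd h hne
  · exact (key y x hy.1 h hx.2).symm

lemma maxClique_iff {f : Fin (m+1) → Fin (m+1)} (hf : GoodFun f) {s : Finset (Fin (m+1))} :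
    IsMaxClique (graphOf f) s ↔ ∃ v ∈ image f univ, s = Finset.Icc (minPre f v) v := by
  constructor
  · rintro ⟨hcl, hmax⟩
    have hne : s.Nonempty := by
      rcases s.eq_empty_or_nonempty with rfl | h
      · exfalso
        have h0 : (graphOf f).IsClique (↑({0} : Finset (Fin (m+1))) : Set (Fin (m+1))) := by
          simp only [coe_singleton]
          exact (graphOf f).isClique_singleton 0
        have := hmax {0} h0 (empty_subset _)
        exact (Finset.singleton_ne_empty 0) this.symm
      · exact h
    set A := s.min' hne with hA
    set v := f A with hv
    have hvim : v ∈ image f univ := mem_image.2 ⟨A, mem_univ _, rfl⟩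
    have hsub : s ⊆ Finset.Icc (minPre f v) v := by
      intro u hu
      rw [mem_Icc]
      constructor
      · exact (minPre_le hvim rfl).trans (s.min'_le u hu)
      · rcases eq_or_lt_of_le (s.min'_le u hu) with he | hlt
        · rw [← he, ← hA]
          exact hf.2 A
        · rw [← hA] at hlt
          have hadj : (graphOf f).Adj A u := hcl (s.min'_mem hne) hu (ne_of_lt hlt)
          exact (graphOf_adj' hlt).1 hadj
    refine ⟨v, hvim, ?_⟩
    exact hmax _ (isClique_Icc hf (minPre_eq hvim).ge) hsub
  · rintro ⟨v, hvim, rfl⟩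
    have hfa : f (minPre f v) = v := minPre_eq hvim
    have hav : minPre f v ≤ v := by
      have := hf.2 (minPre f v)
      rwa [hfa] at this
    refine ⟨isClique_Icc hf (le_of_eq hfa.symm), ?_⟩
    intro t ht hsub
    apply Finset.Subset.antisymm hsub
    intro u hu
    have hvmem : v ∈ Finset.Icc (minPre f v) v := mem_Icc.2 ⟨hav, le_rfl⟩
    have hamem : minPre f v ∈ Finset.Icc (minPre f v) v := mem_Icc.2 ⟨le_rfl, hav⟩
    rw [mem_Icc]
    constructor
    · by_contra hua
      push_neg at hua
      have hune : u ≠ v := ne_of_lt (lt_of_lt_of_le hua hav)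
      have hadj : (graphOf f).Adj u v := ht hu (hsub hvmem) hune
      have huv : u < v := lt_of_lt_of_le hua hav
      have h1 : v ≤ f u := (graphOf_adj' huv).1 hadj
      have h2 : f u ≤ v := by
        rw [← hfa]
        exact hf.1 (le_of_lt hua)
      have : f u = v := le_antisymm h2 h1
      exact absurd (minPre_le hvim this) (not_le.2 hua)
    · by_contra huv
      push_neg at huv
      have hune : minPre f v ≠ u := ne_of_lt (lt_of_le_of_lt hav huv)
      have hadj : (graphOf f).Adj (minPre f v) u := ht (hsub hamem) hu hune
      have h1 : u ≤ f (minPre f v) := (graphOf_adj' (lt_of_le_of_lt hav huv)).1 hadj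
      rw [hfa] at h1
      exact absurd h1 (not_le.2 huv)

noncomputable def maxOf (s : Finset (Fin (m+1))) : Fin (m+1) :=
  if h : s.Nonempty then s.max' h else 0

lemma maxOf_Icc {a v : Fin (m+1)} (h : a ≤ v) : maxOf (Finset.Icc a v) = v := by
  have hne : (Finset.Icc a v).Nonempty := Finset.nonempty_Icc.2 h
  rw [maxOf, dif_pos hne]
  apply le_antisymm
  · apply max'_le
    intro u hu
    exact (mem_Icc.1 hu).2
  · exact le_max' _ v (mem_Icc.2 ⟨h, le_rfl⟩)

lemma numMaxCliques_graphOf {f : Fin (m+1) → Fin (m+1)} (hf : GoodFun f) :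
    numMaxCliques (graphOf f) = (image f univ).card := by
  rw [numMaxCliques, Nat.card_eq_fintype_card, Fintype.card_subtype]
  apply card_bij (fun s _ => maxOf s)
  · intro s hs
    rw [mem_filter] at hs
    obtain ⟨v, hvim, rfl⟩ := (maxClique_iff hf).1 hs.2
    have hav : minPre f v ≤ v := by
      have := hf.2 (minPre f v)
      rwa [minPre_eq hvim] at this
    rw [maxOf_Icc hav]
    exact hvim
  · intro s hs s' hs' he
    rw [mem_filter] at hs hs'
    obtain ⟨v, hvim, rfl⟩ := (maxClique_iff hf).1 hs.2
    obtain ⟨v', hvim', rfl⟩ := (maxClique_iff hf).1 hs'.2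
    have hav : minPre f v ≤ v := by
      have := hf.2 (minPre f v)
      rwa [minPre_eq hvim] at this
    have hav' : minPre f v' ≤ v' := by
      have := hf.2 (minPre f v')
      rwa [minPre_eq hvim'] at this
    rw [maxOf_Icc hav, maxOf_Icc hav'] at he
    rw [he]
  · intro v hvim
    have hav : minPre f v ≤ v := by
      have := hf.2 (minPre f v)
      rwa [minPre_eq hvim] at this
    refine ⟨Finset.Icc (minPre f v) v, ?_, maxOf_Icc hav⟩
    rw [mem_filter]
    exact ⟨mem_univ _, (maxClique_iff hf).2 ⟨v, hvim, rfl⟩⟩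

lemma graph_count (m k : ℕ) :
    Nat.card {G : SimpleGraph (Fin (m+1)) // IntervalClique G ∧ numMaxCliques G = k}
      = Nat.card {f : Fin (m+1) → Fin (m+1) // GoodFun f ∧ (image f univ).card = k} := by
  apply Nat.card_congr
  refine ⟨fun G => ⟨fOf G.1, goodFun_fOf G.2.1, ?_⟩,
    fun f => ⟨graphOf f.1, intervalClique_graphOf f.2.1, ?_⟩, ?_, ?_⟩
  · have h1 : graphOf (fOf G.1) = G.1 := graphOf_fOf G.2.1
    have h2 := numMaxCliques_graphOf (goodFun_fOf G.2.1)
    rw [h1] at h2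
    rw [← h2]
    exact G.2.2
  · rw [numMaxCliques_graphOf f.2.1]
    exact f.2.2
  · intro G
    exact Subtype.ext (graphOf_fOf G.2.1)
  · intro f
    exact Subtype.ext (fOf_graphOf f.2.1)


/-- the number of interval-clique graphs on `{1,...,n}` with exactly `k`
maximal cliques equals the Narayana number `(1/n)·C(n,k)·C(n,k-1)`. -/
theorem card_intervalClique_graphs_with_k_max_cliques (n k : ℕ) (hn : 1 ≤ n)
    (hk1 : 1 ≤ k) (hkn : k ≤ n) :
    Nat.card {G : SimpleGraph (Fin n) // IntervalClique G ∧ numMaxCliques G = k} * n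
      = n.choose k * n.choose (k - 1) := by
  obtain ⟨m, rfl⟩ : ∃ m, n = m + 1 := ⟨n - 1, by omega⟩
  obtain ⟨p, rfl⟩ : ∃ p, k = p + 1 := ⟨k - 1, by omega⟩
  have h1 := graph_count m (p+1)
  have h2 := monoFun_natcard m p
  have h3 := goodPairs_count m p (by omega)
  rw [h1, h2, Nat.add_sub_cancel]
  exact h3
end
end

section
/- The total number of graphs on vertex set {1,...,n} satisfying the interval-clique property equals the n-th Catalan number C_n = (1/(n+1)) · C(2n, n). -/
/-- Monotone functions `f : ℕ → ℕ` with `i ≤ f i < n` on `[0,n)` and junk value `0` elsewhere. -/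
def MonoAbove (n : ℕ) : Type :=
  {f : ℕ → ℕ // (∀ i, i < n → i ≤ f i ∧ f i < n) ∧
    (∀ i j, i ≤ j → j < n → f i ≤ f j) ∧ ∀ i, n ≤ i → f i = 0}

instance (n : ℕ) : Finite (MonoAbove n) := by
  apply Finite.of_injective (fun f : MonoAbove n => fun i : Fin n => (⟨f.1 i, (f.2.1 i i.2).2⟩ : Fin n))
  intro f g h
  apply Subtype.ext
  funext i
  by_cases hi : i < n
  · have := congrFun h ⟨i, hi⟩
    simpa using congrArg Fin.val this
  · rw [f.2.2.2 i (by omega), g.2.2.2 i (by omega)]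

instance : Unique (MonoAbove 0) where
  default := ⟨fun _ => 0, by simp [MonoAbove]⟩
  uniq := by
    rintro ⟨f, h1, h2, h3⟩
    apply Subtype.ext
    funext i
    exact h3 i (Nat.zero_le i)

theorem monoAbove_zero : Nat.card (MonoAbove 0) = 1 := Nat.card_unique

/-- first return to the diagonal -/
noncomputable def KF {n : ℕ} (f : MonoAbove (n+1)) : ℕ :=
  Nat.find (⟨n, Nat.lt_succ_iff.mp (f.2.1 n (by omega)).2⟩ : ∃ m, f.1 m ≤ m)

theorem KF_le {n : ℕ} (f : MonoAbove (n+1)) : KF f ≤ n :=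
  Nat.find_min' _ (Nat.lt_succ_iff.mp (f.2.1 n (by omega)).2)

theorem KF_fixed {n : ℕ} (f : MonoAbove (n+1)) : f.1 (KF f) = KF f := by
  have h1 : f.1 (KF f) ≤ KF f := by unfold KF; exact Nat.find_spec (p := fun m => f.1 m ≤ m) _
  have h2 := (f.2.1 (KF f) (by have := KF_le f; omega)).1
  omega

theorem KF_min {n : ℕ} (f : MonoAbove (n+1)) {m : ℕ} (hm : m < KF f) : m < f.1 m := by
  unfold KF at hm
  have := Nat.find_min _ hm
  omega

theorem KF_eq {n : ℕ} (f : MonoAbove (n+1)) {kv : ℕ} (hfix : f.1 kv = kv)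
    (hmin : ∀ m, m < kv → m < f.1 m) : KF f = kv := by
  refine le_antisymm ?_ ?_
  · unfold KF; exact Nat.find_min' _ (le_of_eq hfix)
  · by_contra hc
    have h1 := KF_fixed f
    have h2 := hmin (KF f) (by omega)
    omega

/-- The fiber of `KF` over `k` is equivalent to a product. -/
noncomputable def fiberEquiv (n : ℕ) (k : Fin (n+1)) :
    {f : MonoAbove (n+1) // (⟨KF f, by have := KF_le f; omega⟩ : Fin (n+1)) = k} ≃
      MonoAbove k × MonoAbove (n - k) where
  toFun f :=
    (⟨fun a => if a < (k : ℕ) then f.1.1 a - 1 else 0, by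
      have hkv : KF f.1 = (k : ℕ) := congrArg Fin.val f.2
      have hkn : (k : ℕ) ≤ n := Nat.lt_succ_iff.mp k.2
      have hfix : f.1.1 (k : ℕ) = (k : ℕ) := by rw [← hkv]; exact KF_fixed f.1
      have hmin : ∀ m, m < (k : ℕ) → m < f.1.1 m := fun m hm => KF_min f.1 (by omega)
      obtain ⟨h1, h2, h3⟩ := f.1.2
      refine ⟨fun a ha => ?_, fun a b hab hb => ?_, fun a ha => ?_⟩ <;> dsimp only
      · rw [if_pos ha]
        have h4 := h2 a (k : ℕ) ha.le (by omega)
        have h5 := hmin a ha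
        omega
      · rw [if_pos (lt_of_le_of_lt hab hb), if_pos hb]
        have h4 := h2 a b hab (by omega)
        omega
      · rw [if_neg (by omega)]⟩,
    ⟨fun a => if a < n - (k : ℕ) then f.1.1 ((k : ℕ) + 1 + a) - ((k : ℕ) + 1) else 0, by
      have hkn : (k : ℕ) ≤ n := Nat.lt_succ_iff.mp k.2
      obtain ⟨h1, h2, h3⟩ := f.1.2
      refine ⟨fun a ha => ?_, fun a b hab hb => ?_, fun a ha => ?_⟩ <;> dsimp only
      · rw [if_pos ha]
        have h4 := h1 ((k : ℕ) + 1 + a) (by omega)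
        omega
      · rw [if_pos (lt_of_le_of_lt hab hb), if_pos hb]
        have h4 := h2 ((k : ℕ) + 1 + a) ((k : ℕ) + 1 + b) (by omega) (by omega)
        omega
      · rw [if_neg (by omega)]⟩)
  invFun gh :=
    ⟨⟨fun i => if i < (k : ℕ) then gh.1.1 i + 1 else if i = (k : ℕ) then (k : ℕ)
        else if i < n + 1 then gh.2.1 (i - ((k : ℕ) + 1)) + ((k : ℕ) + 1) else 0, by
      have hkn : (k : ℕ) ≤ n := Nat.lt_succ_iff.mp k.2
      obtain ⟨⟨g, hg1, hg2, hg3⟩, ⟨h, hh1, hh2, hh3⟩⟩ := gh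
      refine ⟨fun i hi => ?_, fun i j hij hj => ?_, fun i hi => ?_⟩ <;> dsimp only
      · by_cases h1 : i < (k : ℕ)
        · rw [if_pos h1]
          have := hg1 i h1
          omega
        · by_cases h2 : i = (k : ℕ)
          · rw [if_neg h1, if_pos h2]; omega
          · rw [if_neg h1, if_neg h2, if_pos hi]
            have := hh1 (i - ((k : ℕ) + 1)) (by omega)
            omega
      · by_cases h1 : j < (k : ℕ)
        · rw [if_pos (by omega), if_pos h1]
          have := hg2 i j hij h1
          omega
        · by_cases h2 : i < (k : ℕ)
          · rw [if_pos h2, if_neg h1]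
            have h5 := (hg1 i h2).2
            by_cases h3 : j = (k : ℕ)
            · rw [if_pos h3]; omega
            · rw [if_neg h3, if_pos hj]; omega
          · rw [if_neg h2, if_neg h1]
            by_cases h3 : i = (k : ℕ)
            · rw [if_pos h3]
              by_cases h4 : j = (k : ℕ)
              · rw [if_pos h4]
              · rw [if_neg h4, if_pos hj]; omega
            · have h4 : ¬ j = (k : ℕ) := by omega
              rw [if_neg h3, if_neg h4, if_pos hj, if_pos (lt_of_le_of_lt hij hj)]
              have := hh2 (i - ((k : ℕ) + 1)) (j - ((k : ℕ) + 1)) (by omega) (by omega)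
              omega
      · rw [if_neg (by omega), if_neg (by omega), if_neg (by omega)]⟩, by
      apply Fin.ext
      show KF _ = (k : ℕ)
      apply KF_eq
      · show (if (k : ℕ) < (k : ℕ) then _ else if (k : ℕ) = (k : ℕ) then (k : ℕ) else _) = (k : ℕ)
        rw [if_neg (lt_irrefl _), if_pos rfl]
      · intro m hm
        show m < (if m < (k : ℕ) then gh.1.1 m + 1 else _)
        rw [if_pos hm]
        have := gh.1.2.1 m hm
        omega⟩
  left_inv := by
    rintro ⟨⟨f, hf1, hf2, hf3⟩, hk⟩
    have hkv : KF ⟨f, hf1, hf2, hf3⟩ = (k : ℕ) := congrArg Fin.val hk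
    have hkn : (k : ℕ) ≤ n := Nat.lt_succ_iff.mp k.2
    have hfix : f (k : ℕ) = (k : ℕ) := by rw [← hkv]; exact KF_fixed ⟨f, hf1, hf2, hf3⟩
    have hmin : ∀ m, m < (k : ℕ) → m < f m := fun m hm => KF_min ⟨f, hf1, hf2, hf3⟩ (by omega)
    apply Subtype.ext
    apply Subtype.ext
    funext i
    dsimp only
    by_cases h1 : i < (k : ℕ)
    · rw [if_pos h1, if_pos h1]
      have := hmin i h1
      omega
    · by_cases h2 : i = (k : ℕ)
      · rw [if_neg h1, if_pos h2, h2, hfix]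
      · by_cases h3 : i < n + 1
        · rw [if_neg h1, if_neg h2, if_pos h3, if_pos (by omega : i - ((k : ℕ) + 1) < n - (k : ℕ))]
          have he : (k : ℕ) + 1 + (i - ((k : ℕ) + 1)) = i := by omega
          rw [he]
          have := hf1 i h3
          omega
        · rw [if_neg h1, if_neg h2, if_neg h3, hf3 i (by omega)]
  right_inv := by
    rintro ⟨⟨g, hg1, hg2, hg3⟩, ⟨h, hh1, hh2, hh3⟩⟩
    have hkn : (k : ℕ) ≤ n := Nat.lt_succ_iff.mp k.2
    dsimp only
    congr 1
    · apply Subtype.ext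
      funext a
      dsimp only
      by_cases h1 : a < (k : ℕ)
      · rw [if_pos h1, if_pos h1]
        omega
      · rw [if_neg h1, hg3 a (by omega)]
    · apply Subtype.ext
      funext a
      dsimp only
      by_cases h1 : a < n - (k : ℕ)
      · rw [if_pos h1, if_neg (by omega : ¬ (k : ℕ) + 1 + a < (k : ℕ)),
          if_neg (by omega : ¬ (k : ℕ) + 1 + a = (k : ℕ)), if_pos (by omega : (k : ℕ) + 1 + a < n + 1)]
        have he : (k : ℕ) + 1 + a - ((k : ℕ) + 1) = a := by omega
        rw [he]
        omega
      · rw [if_neg h1, hh3 a (by omega)]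

theorem monoAbove_card_succ (n : ℕ) :
    Nat.card (MonoAbove (n+1)) =
      ∑ i : Fin (n+1), Nat.card (MonoAbove i) * Nat.card (MonoAbove (n - i)) := by
  classical
  have e := (Equiv.sigmaFiberEquiv
    (fun f : MonoAbove (n+1) => (⟨KF f, by have := KF_le f; omega⟩ : Fin (n+1)))).symm
  rw [Nat.card_congr e]
  letI : ∀ k : Fin (n+1), Fintype {f : MonoAbove (n+1) //
      (⟨KF f, by have := KF_le f; omega⟩ : Fin (n+1)) = k} := fun k => Fintype.ofFinite _
  rw [Nat.card_eq_fintype_card, Fintype.card_sigma]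
  refine Finset.sum_congr rfl fun k _ => ?_
  rw [← Nat.card_eq_fintype_card, Nat.card_congr (fiberEquiv n k), Nat.card_prod]

theorem monoAbove_card (n : ℕ) : Nat.card (MonoAbove n) = catalan n := by
  induction n using Nat.strong_induction_on with
  | _ n ih =>
    match n with
    | 0 => simp [monoAbove_zero]
    | (m+1) =>
      rw [monoAbove_card_succ, catalan_succ]
      refine Finset.sum_congr rfl fun i _ => ?_
      rw [ih i (by omega), ih (m - i) (by omega)]

open Classical in
/-- the largest vertex that is `i` or a neighbor of `i` -/
noncomputable def maxNbr {n : ℕ} (G : SimpleGraph (Fin n)) (i : Fin n) : Fin n :=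
  (Finset.univ.filter (fun j => j = i ∨ G.Adj i j)).max' ⟨i, by simp⟩

theorem maxNbr_spec {n : ℕ} (G : SimpleGraph (Fin n)) (i : Fin n) :
    maxNbr G i = i ∨ G.Adj i (maxNbr G i) := by
  classical
  have := Finset.max'_mem (Finset.univ.filter (fun j => j = i ∨ G.Adj i j)) ⟨i, by simp⟩
  simpa [maxNbr] using this

theorem le_maxNbr {n : ℕ} (G : SimpleGraph (Fin n)) (i : Fin n) : i ≤ maxNbr G i := by
  classical
  exact Finset.le_max' _ i (by simp)

theorem le_maxNbr_of_adj {n : ℕ} {G : SimpleGraph (Fin n)} {i j : Fin n} (h : G.Adj i j) :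
    j ≤ maxNbr G i := by
  classical
  exact Finset.le_max' _ j (by simp [h])

theorem maxNbr_le {n : ℕ} {G : SimpleGraph (Fin n)} {i c : Fin n} (hic : i ≤ c)
    (h : ∀ j, G.Adj i j → j ≤ c) : maxNbr G i ≤ c := by
  classical
  apply Finset.max'_le
  intro j hj
  simp only [Finset.mem_filter, Finset.mem_univ, true_and] at hj
  rcases hj with rfl | hj
  · exact hic
  · exact h j hj

theorem adj_iff_le_maxNbr {n : ℕ} {G : SimpleGraph (Fin n)} (hG : IntervalClique G)
    {a b : Fin n} (hab : a < b) : G.Adj a b ↔ b ≤ maxNbr G a := by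
  constructor
  · exact le_maxNbr_of_adj
  · intro hb
    have ham : a < maxNbr G a := lt_of_lt_of_le hab hb
    rcases maxNbr_spec G a with hsp | hsp
    · rw [hsp] at ham; exact absurd ham (lt_irrefl a)
    · exact hG a _ a b ham hsp le_rfl ham.le hab.le hb (ne_of_lt hab)

/-- interval-clique graphs are equivalent to monotone functions above the diagonal -/
noncomputable def graphEquiv (n : ℕ) :
    {G : SimpleGraph (Fin n) // IntervalClique G} ≃ MonoAbove n where
  toFun G := ⟨fun i => if h : i < n then (maxNbr G.1 ⟨i, h⟩ : ℕ) else 0, by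
    refine ⟨fun i hi => ?_, fun i j hij hj => ?_, fun i hi => ?_⟩ <;> dsimp only
    · rw [dif_pos hi]
      exact ⟨le_maxNbr G.1 ⟨i, hi⟩, (maxNbr G.1 ⟨i, hi⟩).2⟩
    · have hi : i < n := lt_of_le_of_lt hij hj
      rw [dif_pos hi, dif_pos hj]
      by_cases hc : (maxNbr G.1 ⟨i, hi⟩ : ℕ) ≤ j
      · have h4 := le_maxNbr G.1 ⟨j, hj⟩
        rw [Fin.le_def] at h4
        exact le_trans hc h4
      · have hadj : G.1.Adj ⟨i, hi⟩ (maxNbr G.1 ⟨i, hi⟩) := by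
          rcases maxNbr_spec G.1 ⟨i, hi⟩ with hsp | hsp
          · have := congrArg Fin.val hsp
            simp only [Fin.val_mk] at this
            omega
          · exact hsp
        have h2 : G.1.Adj ⟨j, hj⟩ (maxNbr G.1 ⟨i, hi⟩) := by
          refine G.2 ⟨i, hi⟩ (maxNbr G.1 ⟨i, hi⟩) ⟨j, hj⟩ (maxNbr G.1 ⟨i, hi⟩) ?_ hadj ?_ ?_ ?_
            le_rfl ?_
          · rw [Fin.lt_def]; exact (show i < (maxNbr G.1 ⟨i, hi⟩ : ℕ) by omega)
          · rw [Fin.le_def]; exact (show i ≤ (j : ℕ) by omega)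
          · rw [Fin.le_def]; exact (show (j : ℕ) ≤ (maxNbr G.1 ⟨i, hi⟩ : ℕ) by omega)
          · rw [Fin.le_def]; exact (show i ≤ (maxNbr G.1 ⟨i, hi⟩ : ℕ) by omega)
          · intro hcon
            apply hc
            rw [← hcon]
        have h3 := le_maxNbr_of_adj h2
        rw [Fin.le_def] at h3
        exact h3
    · rw [dif_neg (by omega)]⟩
  invFun f := ⟨SimpleGraph.fromRel (fun a b : Fin n => a < b ∧ (b : ℕ) ≤ f.1 (a : ℕ)), by
    intro i j kk ll hij hadj hik hkj hil hlj hkl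
    rw [SimpleGraph.fromRel_adj] at hadj
    have hfij : (j : ℕ) ≤ f.1 i := by
      rcases hadj.2 with h | h
      · exact h.2
      · exact absurd h.1 (asymm hij)
    have key : ∀ a b : Fin n, i ≤ a → a < b → b ≤ j → (SimpleGraph.fromRel
        (fun a b : Fin n => a < b ∧ (b : ℕ) ≤ f.1 (a : ℕ))).Adj a b := by
      intro a b hia hab hbj
      rw [SimpleGraph.fromRel_adj]
      refine ⟨ne_of_lt hab, Or.inl ⟨hab, ?_⟩⟩
      have h1 : f.1 i ≤ f.1 a := f.2.2.1 i a hia a.2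
      have h2 : (b : ℕ) ≤ (j : ℕ) := hbj
      omega
    rcases lt_or_gt_of_ne hkl with h | h
    · exact key kk ll hik h hlj
    · exact ((key ll kk hil h hkj).symm)
  ⟩
  left_inv := by
    rintro ⟨G, hG⟩
    apply Subtype.ext
    ext a b
    rw [SimpleGraph.fromRel_adj]
    dsimp only
    rw [dif_pos a.2, dif_pos b.2]
    simp only [Fin.eta]
    constructor
    · rintro ⟨hne, ⟨hab, hle⟩ | ⟨hba, hle⟩⟩
      · exact (adj_iff_le_maxNbr hG hab).mpr (by rwa [Fin.le_def])
      · exact ((adj_iff_le_maxNbr hG hba).mpr (by rwa [Fin.le_def])).symm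
    · intro hadj
      refine ⟨G.ne_of_adj hadj, ?_⟩
      rcases lt_or_gt_of_ne (G.ne_of_adj hadj) with h | h
      · exact Or.inl ⟨h, (adj_iff_le_maxNbr hG h).mp hadj⟩
      · exact Or.inr ⟨h, (adj_iff_le_maxNbr hG h).mp hadj.symm⟩
  right_inv := by
    rintro ⟨f, hf1, hf2, hf3⟩
    apply Subtype.ext
    funext i
    dsimp only
    by_cases hi : i < n
    · rw [dif_pos hi]
      have hfi : f i < n := (hf1 i hi).2
      have hif : i ≤ f i := (hf1 i hi).1
      apply le_antisymm
      · have hb : ∀ j : Fin n, (SimpleGraph.fromRel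
            (fun a b : Fin n => a < b ∧ (b : ℕ) ≤ f (a : ℕ))).Adj ⟨i, hi⟩ j →
            j ≤ (⟨f i, hfi⟩ : Fin n) := by
          intro j hj
          rw [SimpleGraph.fromRel_adj] at hj
          rw [Fin.le_def]
          rcases hj.2 with h | h
          · exact h.2
          · have h5 := h.1
            rw [Fin.lt_def] at h5
            simp only [Fin.val_mk] at h5 ⊢
            omega
        have h6 := maxNbr_le (by rw [Fin.le_def]; exact hif) hb
        rw [Fin.le_def] at h6
        exact h6
      · by_cases he : f i = i
        · rw [he]
          have := le_maxNbr (SimpleGraph.fromRel fun a b : Fin n => a < b ∧ (b : ℕ) ≤ f (a : ℕ)) ⟨i, hi⟩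
          simpa [Fin.le_def] using this
        · have hadj : (SimpleGraph.fromRel fun a b : Fin n => a < b ∧ (b : ℕ) ≤ f (a : ℕ)).Adj
              ⟨i, hi⟩ ⟨f i, hfi⟩ := by
            rw [SimpleGraph.fromRel_adj]
            exact ⟨by simp [Fin.ext_iff]; omega, Or.inl ⟨by simp [Fin.lt_def]; omega, le_rfl⟩⟩
          have := le_maxNbr_of_adj hadj
          simpa [Fin.le_def] using this
    · rw [dif_neg hi, hf3 i (by omega)]

/-- the number of interval-clique graphs on `{1,...,n}` is the `n`-th
Catalan number `C_n = (1/(n+1))·C(2n,n)`. -/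
theorem card_intervalClique_graphs (n : ℕ) :
    Nat.card {G : SimpleGraph (Fin n) // IntervalClique G} = catalan n := by
  rw [Nat.card_congr (graphEquiv n), monoAbove_card]
end

section
/- For k ≥ 2 and k ≤ m ≤ n, the number of interval-clique graphs on {1,...,n} with k maximal cliques whose last maximal clique is exactly [m:n] equals C(n, k-1)·C(m-2, k-2) − C(n-1, k-2)·C(m-1, k-1). -/
open Finset

/-- The set of pairs of endpoint sequences for `k+1` cliques, last clique `[m:n]`. -/
def T (m n k : ℕ) : Set ((Fin (k+1) → ℕ) × (Fin (k+1) → ℕ)) :=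
  {p | StrictMono p.1 ∧ StrictMono p.2 ∧ p.1 0 = 1 ∧ 1 ≤ p.2 0 ∧
       p.2 (Fin.last k) = n ∧ (∀ i : Fin k, p.1 i.succ ≤ p.2 i.castSucc + 1) ∧
       p.1 (Fin.last k) = m}

lemma aux_lb {t : ℕ} {f : Fin (t+1) → ℕ} (hf : StrictMono f) :
    ∀ j (hj : j < t+1), f 0 + j ≤ f ⟨j, hj⟩ := by
  intro j
  induction j with
  | zero => intro hj; simp
  | succ j ih =>
    intro hj
    have h1 := ih (by omega)
    have h2 : f ⟨j, by omega⟩ < f ⟨j+1, hj⟩ := hf (by simp [Fin.lt_def])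
    omega

lemma T_finite (m n k : ℕ) : (T m n k).Finite := by
  apply Set.Finite.subset
    (((Set.Finite.pi (fun _ : Fin (k+1) => Set.finite_Iic m)).prod
      (Set.Finite.pi (fun _ : Fin (k+1) => Set.finite_Iic n))))
  rintro ⟨a, b⟩ ⟨ha, hb, -, -, hbl, -, hal⟩
  constructor
  · intro i _
    have := ha.monotone (Fin.le_last i)
    simpa [Set.mem_Iic, hal] using this.trans_eq hal
  · intro i _
    have := hb.monotone (Fin.le_last i)
    simpa [Set.mem_Iic] using this.trans_eq hbl

lemma strictMono_snoc {t : ℕ} {f : Fin (t+1) → ℕ} (hf : StrictMono f) {x : ℕ}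
    (hx : f (Fin.last t) < x) : StrictMono (Fin.snoc f x : Fin (t+2) → ℕ) := by
  rw [Fin.strictMono_iff_lt_succ]
  intro i
  induction i using Fin.lastCases with
  | last => simpa [Fin.succ_last] using hx
  | cast j =>
    rw [Fin.succ_castSucc]
    have e : (j.castSucc.succ : Fin (t+2)) = j.succ.castSucc := Fin.ext (by simp)
    simp only [e, Fin.snoc_castSucc]
    exact hf (Fin.castSucc_lt_succ : j.castSucc < j.succ)

lemma idx_mem {m n k : ℕ} {p : (Fin (k+2) → ℕ) × (Fin (k+2) → ℕ)}
    (hp : p ∈ T m n (k+1)) :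
    (p.1 (Fin.last k).castSucc, p.2 (Fin.last k).castSucc)
      ∈ Finset.Icc (k+1) (m-1) ×ˢ Finset.Icc (m-1) (n-1) := by
  obtain ⟨ha, hb, ha0, hb0, hbl, hcon, hal⟩ := hp
  rw [Finset.mem_product, Finset.mem_Icc, Finset.mem_Icc]
  have h1 := aux_lb ha ((Fin.last k).castSucc).val (by simp)
  have h2 : p.1 (Fin.last k).castSucc < m :=
    lt_of_lt_of_eq (ha (Fin.castSucc_lt_last _)) hal
  have h3 : p.2 (Fin.last k).castSucc < n :=
    lt_of_lt_of_eq (hb (Fin.castSucc_lt_last _)) hbl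
  have h4 : p.1 (Fin.last (k+1)) ≤ p.2 (Fin.last k).castSucc + 1 := hcon (Fin.last k)
  rw [hal] at h4
  have h5 : ((Fin.last k).castSucc : Fin (k+2)).val = k := by simp
  simp only [Fin.eta] at h1
  constructor
  · constructor
    · omega
    · omega
  · omega

lemma restrict_mem {m n k : ℕ} {p : (Fin (k+2) → ℕ) × (Fin (k+2) → ℕ)}
    (hp : p ∈ T m n (k+1)) :
    ((Fin.init p.1, Fin.init p.2) : (Fin (k+1) → ℕ) × (Fin (k+1) → ℕ))
      ∈ T (p.1 (Fin.last k).castSucc) (p.2 (Fin.last k).castSucc) k := by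
  obtain ⟨ha, hb, ha0, hb0, hbl, hcon, hal⟩ := hp
  refine ⟨?_, ?_, ?_, ?_, ?_, ?_, ?_⟩
  · intro i j hij
    simp only [Fin.init]
    exact ha (by rwa [Fin.castSucc_lt_castSucc_iff])
  · intro i j hij
    simp only [Fin.init]
    exact hb (by rwa [Fin.castSucc_lt_castSucc_iff])
  · simpa [Fin.init] using ha0
  · simpa [Fin.init] using hb0
  · simp [Fin.init]
  · intro i
    simp only [Fin.init]
    rw [← Fin.succ_castSucc]
    exact hcon i.castSucc
  · simp [Fin.init]

lemma snoc_mem {m n k u v : ℕ} (hu : u ∈ Finset.Icc (k+1) (m-1))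
    (hv : v ∈ Finset.Icc (m-1) (n-1))
    {q : (Fin (k+1) → ℕ) × (Fin (k+1) → ℕ)} (hq : q ∈ T u v k) :
    ((Fin.snoc q.1 m, Fin.snoc q.2 n) : (Fin (k+2) → ℕ) × (Fin (k+2) → ℕ))
      ∈ T m n (k+1) := by
  rw [Finset.mem_Icc] at hu hv
  obtain ⟨ha, hb, ha0, hb0, hbl, hcon, hal⟩ := hq
  have hum : u < m := by omega
  have hvn : v < n := by omega
  refine ⟨?_, ?_, ?_, ?_, ?_, ?_, ?_⟩ <;> dsimp only
  · exact strictMono_snoc ha (by rw [hal]; exact hum)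
  · exact strictMono_snoc hb (by rw [hbl]; exact hvn)
  · exact (Fin.snoc_castSucc (α := fun _ => ℕ) (x := m) (p := q.1) (i := 0)).trans ha0
  · exact le_trans hb0
      (le_of_eq (Fin.snoc_castSucc (α := fun _ => ℕ) (x := n) (p := q.2) (i := 0)).symm)
  · simp
  · intro i
    induction i using Fin.lastCases with
    | last =>
      have e1 : (Fin.snoc q.1 m : Fin (k+2) → ℕ) ((Fin.last k).succ) = m :=
        Fin.snoc_last _ _
      have e2 : (Fin.snoc q.2 n : Fin (k+2) → ℕ) ((Fin.last k).castSucc) = q.2 (Fin.last k) :=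
        Fin.snoc_castSucc _ _ _
      rw [e1, e2, hbl]
      omega
    | cast j =>
      have e1 : (Fin.snoc q.1 m : Fin (k+2) → ℕ) (j.castSucc.succ) = q.1 j.succ := by
        rw [Fin.succ_castSucc]
        exact Fin.snoc_castSucc _ _ _
      have e2 : (Fin.snoc q.2 n : Fin (k+2) → ℕ) (j.castSucc.castSucc) = q.2 j.castSucc :=
        Fin.snoc_castSucc _ _ _
      rw [e1, e2]
      exact hcon j
  · simp

lemma sigma_helper {k : ℕ} {I : Finset (ℕ × ℕ)}
    {i j : ℕ × ℕ} {hi : i ∈ I} {hj : j ∈ I}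
    {x y : (Fin (k+1) → ℕ) × (Fin (k+1) → ℕ)}
    {hx : x ∈ T i.1 i.2 k} {hy : y ∈ T j.1 j.2 k} (hij : i = j) (hxy : x = y) :
    (⟨⟨i, hi⟩, ⟨x, hx⟩⟩ : Σ uv : ↥I, ↥(T (uv : ℕ × ℕ).1 (uv : ℕ × ℕ).2 k))
      = ⟨⟨j, hj⟩, ⟨y, hy⟩⟩ := by
  subst hij; subst hxy; rfl

lemma card_T_succ (m n k : ℕ) :
    Nat.card (T m n (k+1)) =
      ∑ u ∈ Finset.Icc (k+1) (m-1), ∑ v ∈ Finset.Icc (m-1) (n-1),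
        Nat.card (T u v k) := by
  classical
  set I : Finset (ℕ × ℕ) := Finset.Icc (k+1) (m-1) ×ˢ Finset.Icc (m-1) (n-1) with hI
  have E : ↥(T m n (k+1)) ≃ Σ uv : ↥I, ↥(T (uv : ℕ × ℕ).1 (uv : ℕ × ℕ).2 k) :=
    { toFun := fun p =>
        ⟨⟨(p.1.1 (Fin.last k).castSucc, p.1.2 (Fin.last k).castSucc), idx_mem p.2⟩,
          ⟨(Fin.init p.1.1, Fin.init p.1.2), restrict_mem p.2⟩⟩
      invFun := fun x =>
        ⟨(Fin.snoc (x.2 : (Fin (k+1) → ℕ) × (Fin (k+1) → ℕ)).1 m,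
          Fin.snoc (x.2 : (Fin (k+1) → ℕ) × (Fin (k+1) → ℕ)).2 n),
          snoc_mem (Finset.mem_product.mp x.1.2).1 (Finset.mem_product.mp x.1.2).2
            x.2.2⟩
      left_inv := by
        rintro ⟨⟨a, b⟩, hp⟩
        apply Subtype.ext
        have hal : a (Fin.last (k+1)) = m := hp.2.2.2.2.2.2
        have hbl : b (Fin.last (k+1)) = n := hp.2.2.2.2.1
        refine Prod.ext ?_ ?_
        · show Fin.snoc (Fin.init a) m = a
          rw [← hal]; exact Fin.snoc_init_self a
        · show Fin.snoc (Fin.init b) n = b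
          rw [← hbl]; exact Fin.snoc_init_self b
      right_inv := by
        rintro ⟨⟨⟨u, v⟩, huv⟩, ⟨⟨c, d⟩, hq⟩⟩
        have hcl : c (Fin.last k) = u := hq.2.2.2.2.2.2
        have hdl : d (Fin.last k) = v := hq.2.2.2.2.1
        have h1 : ((Fin.snoc c m : Fin (k+2) → ℕ) ((Fin.last k).castSucc),
            (Fin.snoc d n : Fin (k+2) → ℕ) ((Fin.last k).castSucc)) = (u, v) := by
          rw [Fin.snoc_castSucc, Fin.snoc_castSucc, hcl, hdl]
        have h2 : ((Fin.init (Fin.snoc c m : Fin (k+2) → ℕ)),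
            (Fin.init (Fin.snoc d n : Fin (k+2) → ℕ))) = (c, d) := by
          rw [Fin.init_snoc, Fin.init_snoc]
        exact sigma_helper h1 h2 }
  rw [Nat.card_congr E]
  haveI : ∀ uv : ↥I, Fintype ↥(T (uv : ℕ × ℕ).1 (uv : ℕ × ℕ).2 k) :=
    fun uv => (T_finite _ _ _).fintype
  rw [Nat.card_eq_fintype_card, Fintype.card_sigma]
  have : ∀ uv : ↥I, Fintype.card ↥(T (uv : ℕ × ℕ).1 (uv : ℕ × ℕ).2 k)
      = Nat.card (T (uv : ℕ × ℕ).1 (uv : ℕ × ℕ).2 k) :=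
    fun uv => (Nat.card_eq_fintype_card).symm
  rw [Finset.sum_congr rfl (fun uv _ => this uv)]
  rw [Finset.sum_coe_sort I (fun x => Nat.card (T x.1 x.2 k))]
  rw [hI, Finset.sum_product]

def g : ℕ → ℕ → ℕ → ℕ
  | m, n, 0 => if m = 1 ∧ 1 ≤ n then 1 else 0
  | m, n, k + 1 =>
      ∑ u ∈ Finset.Icc (k+1) (m-1), ∑ v ∈ Finset.Icc (m-1) (n-1), g u v k

lemma card_T_zero (m n : ℕ) : Nat.card (T m n 0) = g m n 0 := by
  classical
  rw [g]
  split_ifs with h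
  · obtain ⟨rfl, hn⟩ := h
    have : T 1 n 0 = {((fun _ => 1 : Fin 1 → ℕ), (fun _ => n : Fin 1 → ℕ))} := by
      ext ⟨a, b⟩
      simp only [T, Set.mem_setOf_eq, Set.mem_singleton_iff]
      haveI : Subsingleton (Fin (0+1)) := Fin.subsingleton_one
      constructor
      · rintro ⟨-, -, ha0, hb0, hbl, -, hal⟩
        refine Prod.ext ?_ ?_
        · funext i
          rw [Subsingleton.elim i 0]
          exact ha0
        · funext i
          rw [Subsingleton.elim i (Fin.last 0)]
          exact hbl
      · intro h
        injection h with h1 h2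
        subst h1
        subst h2
        exact ⟨Subsingleton.strictMono _, Subsingleton.strictMono _, rfl, hn, rfl,
          fun i => i.elim0, rfl⟩
    rw [this]
    simp
  · have : T m n 0 = ∅ := by
      ext ⟨a, b⟩
      simp only [T, Set.mem_setOf_eq, Set.mem_empty_iff_false, iff_false]
      rintro ⟨-, -, ha0, hb0, hbl, -, hal⟩
      have : (0 : Fin 1) = Fin.last 0 := rfl
      rw [this] at ha0 hb0
      exact h ⟨by omega, by omega⟩
    rw [this]
    simp

lemma card_T_all : ∀ (k m n : ℕ), Nat.card (T m n k) = g m n k := by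
  intro k
  induction k with
  | zero => intro m n; exact card_T_zero m n
  | succ k ih =>
    intro m n
    rw [card_T_succ, g]
    exact Finset.sum_congr rfl fun u _ => Finset.sum_congr rfl fun v _ => ih u v

lemma hockey (s j : ℕ) : ∀ a b : ℕ, s ≤ a → a ≤ b + 1 →
    ∑ u ∈ Finset.Icc a b, ((u - s).choose j : ℤ)
      = (((b + 1 - s).choose (j+1) : ℕ) : ℤ) - (((a - s).choose (j+1) : ℕ) : ℤ) := by
  intro a b
  induction b with
  | zero =>
    intro hsa hab
    interval_cases a
    · have hs : s = 0 := by omega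
      subst hs
      simp only [Finset.Icc_self, Finset.sum_singleton, Nat.sub_zero]
      cases j <;> simp [Nat.choose]
    · rw [Finset.Icc_eq_empty (by omega)]
      simp
  | succ b ih =>
    intro hsa hab
    by_cases hcase : a = b + 2
    · subst hcase
      rw [Finset.Icc_eq_empty (by omega)]
      simp
    · have hab' : a ≤ b + 1 := by omega
      rw [Finset.sum_Icc_succ_top hab', ih hsa hab']
      have h1 : b + 1 + 1 - s = (b + 1 - s) + 1 := by omega
      rw [h1]
      have h2 : ((((b + 1 - s) + 1).choose (j+1) : ℕ) : ℤ)
          = (((b+1-s).choose j : ℕ) : ℤ) + (((b+1-s).choose (j+1) : ℕ) : ℤ) := by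
        rw [Nat.choose_succ_succ]
        push_cast
        ring
      rw [h2]
      ring

lemma g_eq : ∀ (j m n : ℕ), j + 2 ≤ m → m ≤ n →
    (g m n (j+1) : ℤ) = ((n.choose (j+1) : ℕ) : ℤ) * (((m-2).choose j : ℕ) : ℤ)
      - (((n-1).choose j : ℕ) : ℤ) * (((m-1).choose (j+1) : ℕ) : ℤ) := by
  intro j
  induction j with
  | zero =>
    intro m n hm hn
    have hg : g m n (0+1) = n - m + 1 := by
      rw [g]
      have key : ∀ u ∈ Finset.Icc (0+1) (m-1),
          (∑ v ∈ Finset.Icc (m-1) (n-1), g u v 0) = if u = 1 then (n - m + 1) else 0 := by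
        intro u hu
        rw [Finset.mem_Icc] at hu
        split_ifs with h
        · subst h
          have h2 : ∀ v ∈ Finset.Icc (m-1) (n-1), g 1 v 0 = 1 := by
            intro v hv
            rw [Finset.mem_Icc] at hv
            rw [g, if_pos ⟨rfl, by omega⟩]
          rw [Finset.sum_congr rfl h2, Finset.sum_const, smul_eq_mul, mul_one, Nat.card_Icc]
          omega
        · apply Finset.sum_eq_zero
          intro v hv
          rw [g, if_neg]
          rintro ⟨h1, -⟩
          exact h h1
      rw [Finset.sum_congr rfl key, Finset.sum_ite_eq' (Finset.Icc (0+1) (m-1))]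
      rw [if_pos (Finset.mem_Icc.mpr ⟨by omega, by omega⟩)]
    rw [hg]
    rw [show (0:ℕ)+1 = 1 from rfl, Nat.choose_one_right, Nat.choose_one_right,
      Nat.choose_zero_right, Nat.choose_zero_right]
    push_cast
    omega
  | succ j ihj =>
    intro m n hm hn
    rw [g]
    rw [show j + 1 + 1 = j + 2 from rfl]
    have inner : ∀ u ∈ Finset.Icc (j+2) (m-1),
        ((∑ v ∈ Finset.Icc (m-1) (n-1), g u v (j+1) : ℕ) : ℤ)
          = (((u-2).choose j : ℕ) : ℤ)
              * ((((n).choose (j+2) : ℕ) : ℤ) - (((m-1).choose (j+2) : ℕ) : ℤ))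
            - (((u-1).choose (j+1) : ℕ) : ℤ)
              * ((((n-1).choose (j+1) : ℕ) : ℤ) - (((m-2).choose (j+1) : ℕ) : ℤ)) := by
      intro u hu
      rw [Finset.mem_Icc] at hu
      have hv1 : ∑ v ∈ Finset.Icc (m-1) (n-1), ((v - 0).choose (j+1) : ℤ)
          = (((n).choose (j+2) : ℕ) : ℤ) - (((m-1).choose (j+2) : ℕ) : ℤ) := by
        have h := hockey 0 (j+1) (m-1) (n-1) (by omega) (by omega)
        rw [show n - 1 + 1 - 0 = n from by omega, show m - 1 - 0 = m - 1 from by omega] at h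
        exact h
      have hv2 : ∑ v ∈ Finset.Icc (m-1) (n-1), ((v - 1).choose j : ℤ)
          = (((n-1).choose (j+1) : ℕ) : ℤ) - (((m-2).choose (j+1) : ℕ) : ℤ) := by
        have h := hockey 1 j (m-1) (n-1) (by omega) (by omega)
        rw [show n - 1 + 1 - 1 = n - 1 from by omega, show m - 1 - 1 = m - 2 from by omega] at h
        exact h
      have e1 : ∑ v ∈ Finset.Icc (m-1) (n-1), ((v.choose (j+1) : ℕ) : ℤ)
          = (((n).choose (j+2) : ℕ) : ℤ) - (((m-1).choose (j+2) : ℕ) : ℤ) := by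
        rw [← hv1]
        exact Finset.sum_congr rfl fun v _ => by rw [Nat.sub_zero]
      calc ((∑ v ∈ Finset.Icc (m-1) (n-1), g u v (j+1) : ℕ) : ℤ)
          = ∑ v ∈ Finset.Icc (m-1) (n-1), ((g u v (j+1) : ℕ) : ℤ) := by push_cast; rfl
        _ = ∑ v ∈ Finset.Icc (m-1) (n-1),
              (((v.choose (j+1) : ℕ) : ℤ) * (((u-2).choose j : ℕ) : ℤ)
                - (((v-1).choose j : ℕ) : ℤ) * (((u-1).choose (j+1) : ℕ) : ℤ)) := by
            refine Finset.sum_congr rfl fun v hv => ?_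
            rw [Finset.mem_Icc] at hv
            exact ihj u v (by omega) (by omega)
        _ = (∑ v ∈ Finset.Icc (m-1) (n-1), ((v.choose (j+1) : ℕ) : ℤ))
                * (((u-2).choose j : ℕ) : ℤ)
              - (∑ v ∈ Finset.Icc (m-1) (n-1), ((v - 1).choose j : ℤ))
                * (((u-1).choose (j+1) : ℕ) : ℤ) := by
            rw [Finset.sum_sub_distrib, Finset.sum_mul, Finset.sum_mul]
        _ = _ := by
            rw [e1, hv2]
            ring
    have hu1 : ∑ u ∈ Finset.Icc (j+2) (m-1), ((u - 2).choose j : ℤ)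
        = (((m-2).choose (j+1) : ℕ) : ℤ) := by
      have h := hockey 2 j (j+2) (m-1) (by omega) (by omega)
      rw [show m - 1 + 1 - 2 = m - 2 from by omega, show j + 2 - 2 = j from by omega] at h
      rw [h, Nat.choose_succ_self]
      simp
    have hu2 : ∑ u ∈ Finset.Icc (j+2) (m-1), ((u - 1).choose (j+1) : ℤ)
        = (((m-1).choose (j+2) : ℕ) : ℤ) := by
      have h := hockey 1 (j+1) (j+2) (m-1) (by omega) (by omega)
      rw [show m - 1 + 1 - 1 = m - 1 from by omega, show j + 2 - 1 = j + 1 from by omega] at h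
      rw [h, Nat.choose_succ_self]
      simp
    calc ((∑ u ∈ Finset.Icc (j+2) (m-1), ∑ v ∈ Finset.Icc (m-1) (n-1), g u v (j+1) : ℕ) : ℤ)
        = ∑ u ∈ Finset.Icc (j+2) (m-1),
            ((∑ v ∈ Finset.Icc (m-1) (n-1), g u v (j+1) : ℕ) : ℤ) := by push_cast; rfl
      _ = ∑ u ∈ Finset.Icc (j+2) (m-1),
            ((((u-2).choose j : ℕ) : ℤ)
              * ((((n).choose (j+2) : ℕ) : ℤ) - (((m-1).choose (j+2) : ℕ) : ℤ))
            - (((u-1).choose (j+1) : ℕ) : ℤ)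
              * ((((n-1).choose (j+1) : ℕ) : ℤ) - (((m-2).choose (j+1) : ℕ) : ℤ))) :=
          Finset.sum_congr rfl inner
      _ = (∑ u ∈ Finset.Icc (j+2) (m-1), (((u-2).choose j : ℕ) : ℤ))
              * ((((n).choose (j+2) : ℕ) : ℤ) - (((m-1).choose (j+2) : ℕ) : ℤ))
            - (∑ u ∈ Finset.Icc (j+2) (m-1), (((u-1).choose (j+1) : ℕ) : ℤ))
              * ((((n-1).choose (j+1) : ℕ) : ℤ) - (((m-2).choose (j+1) : ℕ) : ℤ)) := by
          rw [Finset.sum_sub_distrib, Finset.sum_mul, Finset.sum_mul]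
      _ = ((n.choose (j+2) : ℕ) : ℤ) * (((m-2).choose (j+1) : ℕ) : ℤ)
            - (((n-1).choose (j+1) : ℕ) : ℤ) * (((m-1).choose (j+2) : ℕ) : ℤ) := by
          rw [hu1, hu2]
          ring

set_option maxHeartbeats 1600000 in
/-- for `k ≥ 2` and `k ≤ m ≤ n`, the number of interval-clique graphs on
`{1,...,n}` with `k` maximal cliques whose last maximal clique is exactly `[m:n]`
(such graphs being determined by their sequences of maximal-clique endpoints
`1 = a_1 < ... < a_k ≤ n`, `1 ≤ b_1 < ... < b_k = n`, `a_{i+1} ≤ b_i + 1`, with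
`a_k = m`, `b_k = n`) equals `C(n,k-1)·C(m-2,k-2) − C(n-1,k-2)·C(m-1,k-1)`. -/
theorem card_intervalClique_last_clique_fixed (n m k : ℕ) (hk : 2 ≤ k) (hm : k ≤ m)
    (hn : m ≤ n) :
    Nat.card {p : (Fin k → ℕ) × (Fin k → ℕ) //
        StrictMono p.1 ∧ StrictMono p.2 ∧
        p.1 ⟨0, by omega⟩ = 1 ∧ (∀ i, p.1 i ≤ n) ∧
        1 ≤ p.2 ⟨0, by omega⟩ ∧ p.2 ⟨k - 1, by omega⟩ = n ∧
        (∀ i : Fin k, ∀ h : i.val + 1 < k, p.1 ⟨i.val + 1, h⟩ ≤ p.2 i + 1) ∧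
        p.1 ⟨k - 1, by omega⟩ = m}
      = n.choose (k - 1) * (m - 2).choose (k - 2)
        - (n - 1).choose (k - 2) * (m - 1).choose (k - 1) := by
  obtain ⟨j, rfl⟩ : ∃ j, k = j + 2 := ⟨k - 2, by omega⟩
  have e0 : (⟨0, by omega⟩ : Fin (j+2)) = 0 := by
    apply Fin.ext
    simp
  have elast : (⟨j + 2 - 1, by omega⟩ : Fin (j+2)) = Fin.last (j+1) := by
    apply Fin.ext
    simp
  have key : ∀ p : (Fin (j+2) → ℕ) × (Fin (j+2) → ℕ),
      (StrictMono p.1 ∧ StrictMono p.2 ∧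
        p.1 ⟨0, by omega⟩ = 1 ∧ (∀ i, p.1 i ≤ n) ∧
        1 ≤ p.2 ⟨0, by omega⟩ ∧ p.2 ⟨j + 2 - 1, by omega⟩ = n ∧
        (∀ i : Fin (j+2), ∀ h : i.val + 1 < j + 2, p.1 ⟨i.val + 1, h⟩ ≤ p.2 i + 1) ∧
        p.1 ⟨j + 2 - 1, by omega⟩ = m) ↔ p ∈ T m n (j+1) := by
    intro p
    rw [e0, elast]
    constructor
    · rintro ⟨h1, h2, h3, h4, h5, h6, h7, h8⟩
      refine ⟨h1, h2, h3, h5, h6, ?_, h8⟩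
      intro i
      have hlt : (i.castSucc : Fin (j+2)).val + 1 < j + 2 := by
        have := i.isLt
        simp only [Fin.coe_castSucc]
        omega
      have := h7 i.castSucc hlt
      have eidx : (⟨(i.castSucc : Fin (j+2)).val + 1, hlt⟩ : Fin (j+2)) = i.succ := by
        apply Fin.ext
        simp
      rwa [eidx] at this
    · rintro ⟨h1, h2, h3, h4, h5, h6, h7⟩
      refine ⟨h1, h2, h3, ?_, h4, h5, ?_, h7⟩
      · intro i
        calc p.1 i ≤ p.1 (Fin.last (j+1)) := h1.monotone (Fin.le_last i)
          _ = m := h7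
          _ ≤ n := hn
      · intro i hi
        have hi' : i.val < j + 1 := by omega
        have := h6 ⟨i.val, hi'⟩
        have eidx1 : (⟨i.val, hi'⟩ : Fin (j+1)).succ = (⟨i.val + 1, hi⟩ : Fin (j+2)) := by
          apply Fin.ext
          simp
        have eidx2 : (⟨i.val, hi'⟩ : Fin (j+1)).castSucc = i := by
          apply Fin.ext
          simp
        rwa [eidx1, eidx2] at this
  rw [Nat.card_congr (Equiv.subtypeEquivRight key)]
  rw [show Nat.card (T m n (j+1)) = g m n (j+1) from card_T_all (j+1) m n]
  rw [show j + 2 - 1 = j + 1 from rfl, show j + 2 - 2 = j from rfl]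
  have hz := g_eq j m n (by omega) hn
  have hz' : (g m n (j+1) : ℤ) = ((n.choose (j+1) * (m-2).choose j : ℕ) : ℤ)
      - (((n-1).choose j * (m-1).choose (j+1) : ℕ) : ℤ) := by
    push_cast
    exact hz
  generalize hg' : g m n (j+1) = G at hz'
  generalize hA' : n.choose (j+1) * (m-2).choose j = A at hz' ⊢
  generalize hB' : (n-1).choose j * (m-1).choose (j+1) = B at hz' ⊢
  omega
end

section
/- If p(m,n,k) is defined by p(m,n,1) = 1 if m = 1 and 0 otherwise, and p(m,n,k+1) = Σ_{u=k}^{m-1} Σ_{v=m-1}^{n-1} p(u,v,k), then for k ≥ 2 and k ≤ m ≤ n, p(m,n,k) = C(n,k-1)·C(m-2,k-2) − C(n-1,k-2)·C(m-1,k-1). -/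
/-- Hockey stick over `Icc`, cast to `ℤ`. -/
lemma hs_Icc (j M : ℕ) :
    ∑ v ∈ Finset.Icc j M, ((v.choose j : ℤ)) = ((M + 1).choose (j + 1) : ℤ) := by
  exact_mod_cast congrArg (Nat.cast : ℕ → ℤ) (Nat.sum_Icc_choose M j)

/-- Hockey stick over `Ico`. -/
lemma hs_Ico (j a : ℕ) :
    ∑ v ∈ Finset.Ico j a, ((v.choose j : ℤ)) = (a.choose (j + 1) : ℤ) := by
  induction a with
  | zero => simp [Nat.choose_eq_zero_of_lt (Nat.succ_pos j)]
  | succ a ih =>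
    rcases Nat.lt_or_ge a j with h | h
    · rw [Finset.Ico_eq_empty (by omega)]
      simp [Nat.choose_eq_zero_of_lt (by omega : a + 1 < j + 1)]
    · rw [Finset.sum_Ico_succ_top h, ih, Nat.choose_succ_succ' (a) (j)]
      push_cast
      ring

/-- Difference form of the hockey stick. -/
lemma hs_diff (j a b : ℕ) (hja : j ≤ a) (hab : a ≤ b + 1) :
    ∑ v ∈ Finset.Icc a b, ((v.choose j : ℤ))
      = ((b + 1).choose (j + 1) : ℤ) - (a.choose (j + 1) : ℤ) := by
  have h := Finset.sum_Ico_consecutive (fun v => ((v.choose j : ℤ))) hja hab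
  rw [← Finset.Ico_add_one_right_eq_Icc]
  have h1 := hs_Ico j a
  have h2 := hs_Ico j (b + 1)
  linarith [h, h1, h2]

lemma shift_sum (f : ℕ → ℤ) (a b d : ℕ) :
    ∑ u ∈ Finset.Icc (a + d) (b + d), f u = ∑ u ∈ Finset.Icc a b, f (u + d) := by
  rw [← Finset.map_add_right_Icc, Finset.sum_map]
  rfl

lemma sum_S1 (j M : ℕ) :
    ∑ u ∈ Finset.Icc (j + 2) M, (((u - 2).choose j : ℤ))
      = ((M - 1).choose (j + 1) : ℤ) := by
  rcases Nat.lt_or_ge M (j + 2) with h | h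
  · rw [Finset.Icc_eq_empty (by omega)]
    simp [Nat.choose_eq_zero_of_lt (by omega : M - 1 < j + 1)]
  · obtain ⟨t, rfl⟩ : ∃ t, M = (j + t) + 2 := ⟨M - j - 2, by omega⟩
    rw [shift_sum (fun u => (((u - 2).choose j : ℤ))) j (j + t) 2]
    simp only [Nat.add_sub_cancel]
    rw [hs_Icc]
    norm_num

lemma sum_S3 (j M : ℕ) :
    ∑ u ∈ Finset.Icc (j + 2) M, (((u - 1).choose (j + 1) : ℤ))
      = (M.choose (j + 2) : ℤ) := by
  rcases Nat.lt_or_ge M (j + 2) with h | h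
  · rw [Finset.Icc_eq_empty (by omega)]
    simp [Nat.choose_eq_zero_of_lt (by omega : M < j + 2)]
  · obtain ⟨t, rfl⟩ : ∃ t, M = (j + 1 + t) + 1 := ⟨M - j - 2, by omega⟩
    have e : j + 2 = (j + 1) + 1 := rfl
    rw [e, shift_sum (fun u => (((u - 1).choose (j + 1) : ℤ))) (j + 1) (j + 1 + t) 1]
    simp only [Nat.add_sub_cancel]
    rw [hs_Icc]

/-- if `p(m,n,1) = [m = 1]` and
`p(m,n,k+1) = Σ_{u=k}^{m-1} Σ_{v=m-1}^{n-1} p(u,v,k)`, then for `k ≥ 2` and `k ≤ m ≤ n`,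
`p(m,n,k) = C(n,k-1)·C(m-2,k-2) − C(n-1,k-2)·C(m-1,k-1)`. -/
theorem recurrence_solution (p : ℕ → ℕ → ℕ → ℤ)
    (hbase : ∀ m n, p m n 1 = if m = 1 then 1 else 0)
    (hrec : ∀ m n k, 1 ≤ k →
      p m n (k + 1) = ∑ u ∈ Finset.Icc k (m - 1), ∑ v ∈ Finset.Icc (m - 1) (n - 1), p u v k)
    (k m n : ℕ) (hk : 2 ≤ k) (hm : k ≤ m) (hn : m ≤ n) :
    p m n k = (n.choose (k - 1) : ℤ) * ((m - 2).choose (k - 2) : ℤ)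
      - ((n - 1).choose (k - 2) : ℤ) * ((m - 1).choose (k - 1) : ℤ) := by
  induction k, hk using Nat.le_induction generalizing m n with
  | base =>
    rw [show (2 : ℕ) = 1 + 1 from rfl, hrec m n 1 le_rfl]
    have inner : ∀ u, ∑ v ∈ Finset.Icc (m - 1) (n - 1), p u v 1
        = if u = 1 then ((n - m + 1 : ℕ) : ℤ) else 0 := by
      intro u
      simp only [hbase]
      rcases eq_or_ne u 1 with h | h
      · subst h
        simp [Nat.card_Icc]
        omega
      · simp [h]
    simp only [inner]
    rw [Finset.sum_ite_eq' (Finset.Icc 1 (m - 1)) 1 (fun _ => ((n - m + 1 : ℕ) : ℤ))]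
    rw [if_pos (by simp; omega)]
    simp [Nat.choose_one_right, Nat.choose_zero_right]
    omega
  | succ k hk2 ih =>
    obtain ⟨j, rfl⟩ : ∃ j, k = j + 2 := ⟨k - 2, by omega⟩
    rw [hrec m n (j + 2) (by omega)]
    have key : ∑ u ∈ Finset.Icc (j + 2) (m - 1), ∑ v ∈ Finset.Icc (m - 1) (n - 1), p u v (j + 2)
        = ∑ u ∈ Finset.Icc (j + 2) (m - 1), ∑ v ∈ Finset.Icc (m - 1) (n - 1),
            ((v.choose (j + 1) : ℤ) * ((u - 2).choose j : ℤ)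
              - ((v - 1).choose j : ℤ) * ((u - 1).choose (j + 1) : ℤ)) := by
      refine Finset.sum_congr rfl fun u hu => Finset.sum_congr rfl fun v hv => ?_
      rw [Finset.mem_Icc] at hu hv
      have := ih u v hu.1 (by omega)
      simpa using this
    rw [key]
    have split : ∑ u ∈ Finset.Icc (j + 2) (m - 1), ∑ v ∈ Finset.Icc (m - 1) (n - 1),
            ((v.choose (j + 1) : ℤ) * ((u - 2).choose j : ℤ)
              - ((v - 1).choose j : ℤ) * ((u - 1).choose (j + 1) : ℤ))
        = (∑ u ∈ Finset.Icc (j + 2) (m - 1), (((u - 2).choose j : ℤ)))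
            * (∑ v ∈ Finset.Icc (m - 1) (n - 1), ((v.choose (j + 1) : ℤ)))
          - (∑ u ∈ Finset.Icc (j + 2) (m - 1), (((u - 1).choose (j + 1) : ℤ)))
            * (∑ v ∈ Finset.Icc (m - 1) (n - 1), (((v - 1).choose j : ℤ))) := by
      rw [Finset.sum_mul_sum, Finset.sum_mul_sum, ← Finset.sum_sub_distrib]
      refine Finset.sum_congr rfl fun u _ => ?_
      rw [← Finset.sum_sub_distrib]
      refine Finset.sum_congr rfl fun v _ => ?_
      ring
    rw [split, sum_S1, sum_S3]
    have hS2 : ∑ v ∈ Finset.Icc (m - 1) (n - 1), ((v.choose (j + 1) : ℤ))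
        = (n.choose (j + 2) : ℤ) - ((m - 1).choose (j + 2) : ℤ) := by
      have := hs_diff (j + 1) (m - 1) (n - 1) (by omega) (by omega)
      rwa [show n - 1 + 1 = n by omega] at this
    have hS4 : ∑ v ∈ Finset.Icc (m - 1) (n - 1), (((v - 1).choose j : ℤ))
        = ((n - 1).choose (j + 1) : ℤ) - ((m - 2).choose (j + 1) : ℤ) := by
      rw [show m - 1 = (m - 2) + 1 by omega, show n - 1 = (n - 2) + 1 by omega,
        shift_sum (fun v => (((v - 1).choose j : ℤ))) (m - 2) (n - 2) 1]
      simp only [Nat.add_sub_cancel]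
      have := hs_diff j (m - 2) (n - 2) (by omega) (by omega)
      rw [this, show n - 2 + 1 = n - 1 by omega]
    rw [hS2, hS4]
    have e1 : j + 2 + 1 - 1 = j + 2 := rfl
    have e2 : j + 2 + 1 - 2 = j + 1 := rfl
    rw [e1, e2, show m - 1 - 1 = m - 2 by omega]
    ring
end
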